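/- arXiv:1608.06758 — 6 statements merged into one kernel-verified Lean document; each statement's English description precedes it below -/
import Mathlib

section
/- There exists a constant C > 0 such that for all h ∈ (0,1] and all u ∈ ℝ: |χ_h(u)| ≤ (1/2)·|u|^β + C·h. -/
open MeasureTheory Real Set Filter

private lemma aux_min_interp (a b c θ : ℝ) (ha : 0 ≤ a) (hθ0 : 0 ≤ θ) (hθ1 : θ ≤ 1)
    (h1 : c ≤ a) (h2 : c ≤ b) (hc : 0 ≤ c) : c ≤ a ^ θ * b ^ (1-θ) := by
  calc c = c ^ θ * c ^ (1-θ) := by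
        rw [← Real.rpow_add' hc (by norm_num)]; simp
    _ ≤ a ^ θ * b ^ (1-θ) :=
        mul_le_mul (Real.rpow_le_rpow hc h1 hθ0) (Real.rpow_le_rpow hc h2 (by linarith))
          (Real.rpow_nonneg hc _) (Real.rpow_nonneg ha _)

private lemma aux_young (β γ A : ℝ) (hβ0 : 0 < β) (hγ0 : 0 < γ) (hγβ : γ < β) (hA : 0 ≤ A) :
    ∃ C > 0, ∀ u h : ℝ, u ≠ 0 → 0 ≤ h →
      A * |u| ^ (β - γ) * h ^ (γ/β) ≤ 1/2 * |u| ^ β + C * h := by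
  set w₁ := (β - γ)/β with hw₁def
  set w₂ := γ/β with hw₂def
  have hw₁ : 0 < w₁ := div_pos (by linarith) hβ0
  have hw₂ : 0 < w₂ := div_pos hγ0 hβ0
  have hw : w₁ + w₂ = 1 := by rw [hw₁def, hw₂def]; field_simp; ring
  set lam := 1/(2*w₁) with hlam
  have hlam0 : 0 < lam := by positivity
  set A' := A + 1 with hA'
  have hA'0 : 0 < A' := by linarith
  set μ := (A' * lam ^ (-w₁)) ^ (1/w₂) with hμ
  have hμ0 : 0 < μ := Real.rpow_pos_of_pos (by positivity) _
  refine ⟨μ, hμ0, fun u h hu hh => ?_⟩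
  have hux : (0:ℝ) < |u| := abs_pos.mpr hu
  have key : (lam * |u| ^ β) ^ w₁ * (μ * h) ^ w₂ ≤ w₁ * (lam * |u| ^ β) + w₂ * (μ * h) :=
    Real.geom_mean_le_arith_mean2_weighted hw₁.le hw₂.le (by positivity) (by positivity) hw
  have e2 : (|u| ^ β) ^ w₁ = |u| ^ (β - γ) := by
    rw [← Real.rpow_mul (abs_nonneg u)]
    congr 1
    rw [hw₁def]; field_simp
  have e3 : μ ^ w₂ = A' * lam ^ (-w₁) := by
    rw [hμ, ← Real.rpow_mul (by positivity), one_div, inv_mul_cancel₀ hw₂.ne', Real.rpow_one]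
  have e1 : (lam * |u| ^ β) ^ w₁ * (μ * h) ^ w₂
      = A' * (|u| ^ (β - γ) * h ^ w₂) := by
    rw [Real.mul_rpow hlam0.le (Real.rpow_nonneg (abs_nonneg u) _),
      Real.mul_rpow hμ0.le hh, e2, e3, Real.rpow_neg hlam0.le]
    field_simp
  have hle : A * |u| ^ (β - γ) * h ^ w₂ ≤ A' * (|u| ^ (β - γ) * h ^ w₂) := by
    have : 0 ≤ |u| ^ (β - γ) * h ^ w₂ := by positivity
    nlinarith [Real.rpow_nonneg (abs_nonneg u) (β - γ), Real.rpow_nonneg hh w₂]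
  have h1 : w₁ * (lam * |u| ^ β) = 1/2 * |u| ^ β := by
    rw [hlam]; field_simp
  have h2 : w₂ * (μ * h) ≤ μ * h := by
    have hw₂1 : w₂ ≤ 1 := by nlinarith
    nlinarith [mul_nonneg hμ0.le hh]
  calc A * |u| ^ (β - γ) * h ^ w₂ ≤ A' * (|u| ^ (β - γ) * h ^ w₂) := hle
    _ = (lam * |u| ^ β) ^ w₁ * (μ * h) ^ w₂ := e1.symm
    _ ≤ w₁ * (lam * |u| ^ β) + w₂ * (μ * h) := key
    _ ≤ 1/2 * |u| ^ β + μ * h := by rw [h1]; linarith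

private lemma integrable_comp_abs' {G : ℝ → ℝ} (h : IntegrableOn G (Ioi 0)) :
    Integrable (fun z : ℝ => G |z|) := by
  have h' : IntegrableOn (fun x : ℝ => G |x|) (Ioi 0) := by
    refine h.congr_fun (fun x hx => ?_) measurableSet_Ioi
    rw [abs_eq_self.mpr (le_of_lt hx)]
  have int_Iic : IntegrableOn (fun x : ℝ => G |x|) (Iic 0) := by
    rw [← Measure.map_neg_eq_self (volume : Measure ℝ)]
    have m : MeasurableEmbedding fun x : ℝ => -x := (Homeomorph.neg ℝ).measurableEmbedding
    rw [m.integrableOn_map_iff]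
    simp_rw [Function.comp_def, abs_neg, neg_preimage, neg_Iic, neg_zero]
    exact Iff.mpr integrableOn_Ici_iff_integrableOn_Ioi h'
  have := int_Iic.union h'
  rwa [Iic_union_Ioi, integrableOn_univ] at this

set_option maxHeartbeats 1600000 in
/-- the perturbation `χ_h` of the log-characteristic function satisfies
`|χ_h(u)| ≤ (1/2)|u|^β + C h` uniformly in `h ∈ (0,1]` and `u ∈ ℝ`. -/
theorem chi_h_bound_half_stable
    (β cβ : ℝ) (hβ : β ∈ Set.Ioo (0:ℝ) 2)
    (hcβ : β ≠ 1 → cβ = (1/2) * ((1/β) * Real.Gamma (1 - β) * Real.cos (β * π / 2))⁻¹)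
    (hcβ1 : β = 1 → cβ = 1 / π)
    (ρ : ℝ → ℝ) (hρm : Measurable ρ)
    (hρbdd : ∃ M : ℝ, ∀ z : ℝ, |ρ z| ≤ M)
    (hρrange : ∀ z : ℝ, z ≠ 0 → -1 ≤ ρ z)
    (hρeven : ∀ z : ℝ, ρ (-z) = ρ z)
    (δ cρ ερ : ℝ) (hδ : 0 < δ) (hcρ : 0 ≤ cρ) (hερ : 0 < ερ)
    (hρsmall : ∀ z : ℝ, z ≠ 0 → |z| ≤ ερ → |ρ z| ≤ cρ * |z| ^ δ)
    (χ : ℝ → ℝ → ℝ)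
    (hχ : ∀ h ∈ Set.Ioc (0:ℝ) 1, ∀ u : ℝ,
      χ h u = ∫ z : ℝ, (Real.cos (u * z) - 1) * ρ (h ^ (1/β) * z) * (cβ * |z| ^ (-(1 + β)))) :
    ∃ C > 0, ∀ h ∈ Set.Ioc (0:ℝ) 1, ∀ u : ℝ,
      |χ h u| ≤ (1/2) * |u| ^ β + C * h := by
  obtain ⟨hβ0, hβ2⟩ := hβ
  obtain ⟨M, hM⟩ := hρbdd
  have hM0 : 0 ≤ M := (abs_nonneg _).trans (hM 0)
  -- the auxiliary exponent γ and constants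
  set γ := min δ β / 2 with hγdef
  have hγ0 : 0 < γ := by have := lt_min hδ hβ0; positivity
  have hγβ : γ < β := by have := min_le_right δ β; rw [hγdef]; linarith
  have hγδ : γ < δ := by have := min_le_left δ β; rw [hγdef]; linarith
  set θ := γ / δ with hθdef
  have hθ0 : 0 ≤ θ := by positivity
  have hθ1 : θ ≤ 1 := by rw [hθdef, div_le_one hδ]; linarith
  set K := cρ ^ θ * M ^ (1-θ) with hKdef
  have hK0 : 0 ≤ K := mul_nonneg (Real.rpow_nonneg hcρ _) (Real.rpow_nonneg hM0 _)
  -- the key smallness estimate on ρ near 0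
  have hρK : ∀ w : ℝ, w ≠ 0 → |w| ≤ ερ → |ρ w| ≤ K * |w| ^ γ := by
    intro w hw hwε
    have h1 : |ρ w| ≤ cρ * |w| ^ δ := hρsmall w hw hwε
    have h2 : |ρ w| ≤ M := hM w
    have := aux_min_interp (cρ * |w| ^ δ) M (|ρ w|) θ (by positivity) hθ0 hθ1 h1 h2 (abs_nonneg _)
    calc |ρ w| ≤ (cρ * |w| ^ δ) ^ θ * M ^ (1-θ) := this
      _ = K * |w| ^ γ := by
          rw [Real.mul_rpow hcρ (Real.rpow_nonneg (abs_nonneg w) _),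
            ← Real.rpow_mul (abs_nonneg w)]
          have : δ * θ = γ := by rw [hθdef]; field_simp
          rw [this, hKdef]; ring
  have hβγ2 : 0 < γ + 2 - β := by linarith
  have hβγ : 0 < β - γ := by linarith
  set A := K * |cβ| * (1/(γ+2-β) + 4/(β-γ)) with hAdef
  have hA0 : 0 ≤ A := by positivity
  obtain ⟨Cy, hCy0, hCy⟩ := aux_young β γ A hβ0 hγ0 hγβ hA0
  set C₁ := 4*M*|cβ| * ερ ^ (-β) / β with hC₁def
  have hC₁0 : 0 ≤ C₁ := by positivity
  refine ⟨C₁ + Cy, by linarith, fun h hh u => ?_⟩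
  obtain ⟨hh0, hh1⟩ := hh
  rw [hχ h ⟨hh0, hh1⟩ u]
  by_cases hu : u = 0
  · subst hu
    simp only [zero_mul, Real.cos_zero, sub_self, integral_zero, abs_zero]
    have h0 : |(0:ℝ)| ^ β = 0 := by rw [abs_zero, Real.zero_rpow hβ0.ne']
    rw [abs_zero] at h0
    rw [h0]
    nlinarith
  -- main case u ≠ 0
  have hux : (0:ℝ) < |u| := abs_pos.mpr hu
  set w := h ^ (1/β) with hwdef
  have hw0 : 0 < w := Real.rpow_pos_of_pos hh0 _
  set R0 := ερ / w with hR0def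
  have hR00 : 0 < R0 := by positivity
  set T := |u|⁻¹ with hTdef
  have hT0 : 0 < T := by positivity
  set Kc := K * h ^ (γ/β) * |cβ| with hKcdef
  have hKc0 : 0 ≤ Kc := by positivity
  set f₁ : ℝ → ℝ := fun t => 2*M*|cβ| * t ^ (-(1+β)) with hf₁
  set f₂ : ℝ → ℝ := fun t => Kc * (u^2/2) * t ^ (γ+1-β) with hf₂
  set f₃ : ℝ → ℝ := fun t => Kc * 2 * t ^ (γ-1-β) with hf₃
  set G : ℝ → ℝ := fun t =>
    (Ici R0).indicator f₁ t + (Ioc 0 T).indicator f₂ t + (Ioi T).indicator f₃ t with hGdef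
  -- integrability of the three pieces on (0,∞)
  have hint₁ : IntegrableOn (fun t : ℝ => (Ici R0).indicator f₁ t) (Ioi 0) := by
    refine Integrable.integrableOn ?_
    rw [integrable_indicator_iff measurableSet_Ici]
    exact Iff.mpr integrableOn_Ici_iff_integrableOn_Ioi
      ((integrableOn_Ioi_rpow_of_lt (by linarith) hR00).const_mul _)
  have hint₂ : IntegrableOn (fun t : ℝ => (Ioc 0 T).indicator f₂ t) (Ioi 0) := by
    refine Integrable.integrableOn ?_
    rw [integrable_indicator_iff measurableSet_Ioc]
    exact ((intervalIntegrable_iff_integrableOn_Ioc_of_le hT0.le).mp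
      (intervalIntegral.intervalIntegrable_rpow' (by linarith))).const_mul _
  have hint₃ : IntegrableOn (fun t : ℝ => (Ioi T).indicator f₃ t) (Ioi 0) := by
    refine Integrable.integrableOn ?_
    rw [integrable_indicator_iff measurableSet_Ioi]
    exact (integrableOn_Ioi_rpow_of_lt (by linarith) hT0).const_mul _
  have hGint : IntegrableOn G (Ioi 0) := (hint₁.add hint₂).add hint₃
  have hGabs : Integrable (fun z : ℝ => G |z|) := integrable_comp_abs' hGint
  -- pointwise bound
  have hpt : ∀ z : ℝ, z ≠ 0 →
      |(Real.cos (u * z) - 1) * ρ (w * z) * (cβ * |z| ^ (-(1 + β)))| ≤ G |z| := by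
    intro z hz
    have hz0 : (0:ℝ) < |z| := abs_pos.mpr hz
    have habs : |(Real.cos (u * z) - 1) * ρ (w * z) * (cβ * |z| ^ (-(1 + β)))|
        = |Real.cos (u * z) - 1| * |ρ (w * z)| * (|cβ| * |z| ^ (-(1 + β))) := by
      rw [abs_mul, abs_mul, abs_mul, abs_of_nonneg (Real.rpow_nonneg (abs_nonneg z) _)]
    have hn₁ : 0 ≤ (Ici R0).indicator f₁ |z| :=
      Set.indicator_nonneg (fun t ht => by
        exact mul_nonneg (by positivity) (Real.rpow_nonneg (hR00.le.trans ht) _)) _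
    have hn₂ : 0 ≤ (Ioc 0 T).indicator f₂ |z| :=
      Set.indicator_nonneg (fun t ht => by
        exact mul_nonneg (by positivity) (Real.rpow_nonneg (le_of_lt ht.1) _)) _
    have hn₃ : 0 ≤ (Ioi T).indicator f₃ |z| :=
      Set.indicator_nonneg (fun t ht => by
        exact mul_nonneg (by positivity) (Real.rpow_nonneg ((hT0.le.trans (le_of_lt ht))) _)) _
    have hcos2 : |Real.cos (u * z) - 1| ≤ 2 := by
      have h1 := Real.cos_le_one (u * z)
      have h2 := Real.neg_one_le_cos (u * z)
      rw [abs_of_nonpos (by linarith)]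
      linarith
    by_cases hz1 : R0 ≤ |z|
    · -- tail region
      have hG : f₁ |z| ≤ G |z| := by
        rw [hGdef]
        have : (Ici R0).indicator f₁ |z| = f₁ |z| := Set.indicator_of_mem hz1 _
        simp only
        linarith [hn₂, hn₃, this.symm.le, this.ge]
      refine le_trans ?_ hG
      rw [habs, hf₁]
      have hbb : 0 ≤ |cβ| * |z| ^ (-(1 + β)) := by positivity
      calc |Real.cos (u * z) - 1| * |ρ (w * z)| * (|cβ| * |z| ^ (-(1 + β)))
          ≤ 2 * M * (|cβ| * |z| ^ (-(1 + β))) :=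
            mul_le_mul (mul_le_mul hcos2 (hM _) (abs_nonneg _) (by norm_num))
              le_rfl hbb (by positivity)
        _ = 2 * M * |cβ| * |z| ^ (-(1 + β)) := by ring
    · -- bulk region
      push_neg at hz1
      have hwz : w * z ≠ 0 := mul_ne_zero hw0.ne' hz
      have hwzval : |w * z| = w * |z| := by rw [abs_mul, abs_of_pos hw0]
      have hwzε : |w * z| ≤ ερ := by
        rw [hwzval]
        have : w * |z| ≤ w * R0 := by nlinarith
        have hwR : w * R0 = ερ := by rw [hR0def]; field_simp
        linarith
      have hρb : |ρ (w * z)| ≤ K * h ^ (γ/β) * |z| ^ γ := by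
        have := hρK (w * z) hwz hwzε
        rw [hwzval, Real.mul_rpow hw0.le (abs_nonneg z)] at this
        have hwγ : w ^ γ = h ^ (γ/β) := by
          rw [hwdef, ← Real.rpow_mul hh0.le]
          congr 1
          ring
        rw [hwγ] at this
        linarith [this, mul_assoc K (h ^ (γ/β)) (|z| ^ γ)]
      have hρb0 : 0 ≤ K * h ^ (γ/β) * |z| ^ γ := by positivity
      by_cases hz2 : |z| ≤ T
      · -- |z| ≤ T : quadratic bound on cosine
        have hmem : |z| ∈ Ioc 0 T := ⟨hz0, hz2⟩
        have hcosq : |Real.cos (u * z) - 1| ≤ (u*z)^2/2 := by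
          have h1 := Real.cos_le_one (u * z)
          have h2 := Real.one_sub_sq_div_two_le_cos (x := u * z)
          rw [abs_of_nonpos (by linarith)]
          linarith
        have hG : f₂ |z| ≤ G |z| := by
          rw [hGdef]
          have : (Ioc 0 T).indicator f₂ |z| = f₂ |z| := Set.indicator_of_mem hmem _
          simp only
          linarith [hn₁, hn₃, this.ge]
        refine le_trans ?_ hG
        rw [habs]
        have hbb : 0 ≤ |cβ| * |z| ^ (-(1 + β)) := by positivity
        have key : ((u*z)^2/2) * (K * h ^ (γ/β) * |z| ^ γ) * (|cβ| * |z| ^ (-(1 + β)))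
            = f₂ |z| := by
          rw [hf₂, hKcdef]
          simp only
          rw [mul_pow, ← sq_abs z, ← Real.rpow_natCast |z| 2]
          have e : |z| ^ ((2:ℕ):ℝ) * |z| ^ γ * |z| ^ (-(1 + β)) = |z| ^ (γ+1-β) := by
            rw [← Real.rpow_add hz0, ← Real.rpow_add hz0]
            congr 1
            push_cast
            ring
          calc u ^ 2 * |z| ^ ((2:ℕ):ℝ) / 2 * (K * h ^ (γ / β) * |z| ^ γ)
                * (|cβ| * |z| ^ (-(1 + β)))
              = K * h ^ (γ / β) * |cβ| * (u ^ 2 / 2)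
                * (|z| ^ ((2:ℕ):ℝ) * |z| ^ γ * |z| ^ (-(1 + β))) := by ring
            _ = K * h ^ (γ / β) * |cβ| * (u ^ 2 / 2) * |z| ^ (γ + 1 - β) := by rw [e]
        rw [← key]
        exact mul_le_mul (mul_le_mul hcosq hρb (abs_nonneg _) (by positivity))
          le_rfl hbb (by positivity)
      · -- T < |z|
        push_neg at hz2
        have hmem : |z| ∈ Ioi T := hz2
        have hG : f₃ |z| ≤ G |z| := by
          rw [hGdef]
          have : (Ioi T).indicator f₃ |z| = f₃ |z| := Set.indicator_of_mem hmem _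
          simp only
          linarith [hn₁, hn₂, this.ge]
        refine le_trans ?_ hG
        rw [habs]
        have hbb : 0 ≤ |cβ| * |z| ^ (-(1 + β)) := by positivity
        have key : 2 * (K * h ^ (γ/β) * |z| ^ γ) * (|cβ| * |z| ^ (-(1 + β))) = f₃ |z| := by
          rw [hf₃, hKcdef]
          simp only
          have e : |z| ^ γ * |z| ^ (-(1 + β)) = |z| ^ (γ-1-β) := by
            rw [← Real.rpow_add hz0]
            congr 1
            ring
          calc 2 * (K * h ^ (γ / β) * |z| ^ γ) * (|cβ| * |z| ^ (-(1 + β)))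
              = K * h ^ (γ / β) * |cβ| * 2 * (|z| ^ γ * |z| ^ (-(1 + β))) := by ring
            _ = K * h ^ (γ / β) * |cβ| * 2 * |z| ^ (γ - 1 - β) := by rw [e]
        rw [← key]
        exact mul_le_mul (mul_le_mul hcos2 hρb (abs_nonneg _) (by norm_num))
          le_rfl hbb (by positivity)
  -- the three explicit integrals
  have hJ₁ : ∫ t in Ioi (0:ℝ), (Ici R0).indicator f₁ t = 2*M*|cβ| * (R0 ^ (-β) / β) := by
    rw [setIntegral_indicator measurableSet_Ici]
    have hss : Ioi (0:ℝ) ∩ Ici R0 = Ici R0 :=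
      inter_eq_right.mpr (fun x hx => lt_of_lt_of_le hR00 hx)
    rw [hss, integral_Ici_eq_integral_Ioi, hf₁]
    simp only
    rw [MeasureTheory.integral_const_mul, integral_Ioi_rpow_of_lt (by linarith) hR00]
    have he : -(1+β) + 1 = -β := by ring
    rw [he]
    field_simp
  have hJ₂ : ∫ t in Ioi (0:ℝ), (Ioc 0 T).indicator f₂ t
      = Kc * (u^2/2) * (T ^ (γ+2-β) / (γ+2-β)) := by
    rw [setIntegral_indicator measurableSet_Ioc]
    have hss : Ioi (0:ℝ) ∩ Ioc 0 T = Ioc 0 T := inter_eq_right.mpr Ioc_subset_Ioi_self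
    rw [hss, ← intervalIntegral.integral_of_le hT0.le, hf₂]
    simp only
    rw [intervalIntegral.integral_const_mul, integral_rpow (Or.inl (by linarith))]
    rw [Real.zero_rpow (by linarith : γ+1-β+1 ≠ 0)]
    have he : γ+1-β+1 = γ+2-β := by ring
    rw [he]
    ring
  have hJ₃ : ∫ t in Ioi (0:ℝ), (Ioi T).indicator f₃ t = Kc * 2 * (T ^ (γ-β) / (β-γ)) := by
    rw [setIntegral_indicator measurableSet_Ioi]
    have hss : Ioi (0:ℝ) ∩ Ioi T = Ioi T :=
      inter_eq_right.mpr (fun x hx => lt_trans hT0 hx)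
    rw [hss, hf₃]
    simp only
    rw [MeasureTheory.integral_const_mul, integral_Ioi_rpow_of_lt (by linarith) hT0]
    have he : γ-1-β + 1 = γ-β := by ring
    rw [he]
    congr 1
    rw [div_eq_div_iff (by linarith : γ - β ≠ 0) (by linarith : β - γ ≠ 0)]
    ring
  -- power identities
  have hR0β : R0 ^ (-β) = ερ ^ (-β) * h := by
    have hwβ : w ^ (-β) = h⁻¹ := by
      rw [hwdef, ← Real.rpow_mul hh0.le]
      have he : 1/β * -β = -1 := by field_simp
      rw [he, Real.rpow_neg_one]
    rw [hR0def, div_eq_mul_inv, Real.mul_rpow hερ.le (inv_nonneg.mpr hw0.le),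
      Real.inv_rpow hw0.le, hwβ, inv_inv]
  have hTpow1 : u^2 * T ^ (γ+2-β) = |u| ^ (β-γ) := by
    rw [← sq_abs u, ← Real.rpow_natCast |u| 2, hTdef, ← Real.rpow_neg_one |u|,
      ← Real.rpow_mul (abs_nonneg u), ← Real.rpow_add hux]
    congr 1
    push_cast
    ring
  have hTpow2 : T ^ (γ-β) = |u| ^ (β-γ) := by
    rw [hTdef, ← Real.rpow_neg_one |u|, ← Real.rpow_mul (abs_nonneg u)]
    congr 1
    ring
  -- put everything together
  have hae : ∀ᵐ z : ℝ, |(Real.cos (u * z) - 1) * ρ (w * z) * (cβ * |z| ^ (-(1 + β)))| ≤ G |z| := by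
    have h0 : ∀ᵐ z : ℝ, z ≠ (0:ℝ) := by
      rw [ae_iff]
      have : {z : ℝ | ¬z ≠ 0} = {(0:ℝ)} := by ext x; simp
      rw [this]
      exact Real.volume_singleton
    exact h0.mono fun z hz => hpt z hz
  have step1 : |∫ z : ℝ, (Real.cos (u * z) - 1) * ρ (w * z) * (cβ * |z| ^ (-(1 + β)))|
      ≤ ∫ z : ℝ, |(Real.cos (u * z) - 1) * ρ (w * z) * (cβ * |z| ^ (-(1 + β)))| := by
    have := MeasureTheory.norm_integral_le_integral_norm
        (f := fun z : ℝ => (Real.cos (u * z) - 1) * ρ (w * z) * (cβ * |z| ^ (-(1 + β)))) (μ := volume)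
    simp only [Real.norm_eq_abs] at this
    exact this
  have step2 : ∫ z : ℝ, |(Real.cos (u * z) - 1) * ρ (w * z) * (cβ * |z| ^ (-(1 + β)))|
      ≤ ∫ z : ℝ, G |z| :=
    integral_mono_of_nonneg (Filter.Eventually.of_forall fun z => abs_nonneg _) hGabs hae
  have step3 : ∫ z : ℝ, G |z| = 2 * ∫ t in Ioi (0:ℝ), G t := integral_comp_abs
  have step4 : ∫ t in Ioi (0:ℝ), G t
      = (∫ t in Ioi (0:ℝ), (Ici R0).indicator f₁ t)
        + (∫ t in Ioi (0:ℝ), (Ioc 0 T).indicator f₂ t)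
        + (∫ t in Ioi (0:ℝ), (Ioi T).indicator f₃ t) := by
    have h12 : IntegrableOn
        (fun t : ℝ => (Ici R0).indicator f₁ t + (Ioc 0 T).indicator f₂ t) (Ioi 0) :=
      hint₁.add hint₂
    simp only [hGdef]
    rw [integral_add h12 hint₃, integral_add hint₁ hint₂]
  have hcollect : 2 * ((2*M*|cβ| * (R0 ^ (-β) / β))
        + (Kc * (u^2/2) * (T ^ (γ+2-β) / (γ+2-β)))
        + (Kc * 2 * (T ^ (γ-β) / (β-γ))))
      = C₁ * h + A * |u| ^ (β-γ) * h ^ (γ/β) := by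
    clear_value G f₃ f₂ f₁ Kc T R0 w C₁ A K θ γ
    have e2 : Kc * (u^2/2) * (T ^ (γ+2-β) / (γ+2-β))
        = Kc * (u^2 * T ^ (γ+2-β)) * (1/2) / (γ+2-β) := by ring
    have d1 : γ + 2 - β ≠ 0 := by linarith
    have d2 : β - γ ≠ 0 := by linarith
    have d3 : β ≠ 0 := hβ0.ne'
    rw [e2, hTpow1, hTpow2, hR0β, hC₁def, hAdef, hKcdef]
    field_simp
    ring
  have hyoung := hCy u h hu hh0.le
  calc |∫ z : ℝ, (Real.cos (u * z) - 1) * ρ (w * z) * (cβ * |z| ^ (-(1 + β)))|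
      ≤ ∫ z : ℝ, G |z| := le_trans step1 step2
    _ = 2 * ∫ t in Ioi (0:ℝ), G t := step3
    _ = C₁ * h + A * |u| ^ (β-γ) * h ^ (γ/β) := by
        rw [step4, hJ₁, hJ₂, hJ₃, hcollect]
    _ ≤ C₁ * h + (1/2 * |u| ^ β + Cy * h) := by linarith
    _ = 1/2 * |u| ^ β + (C₁ + Cy) * h := by ring
end

section
/- There exists a constant C > 0 such that for all w > 0: | ∫_0^K sin(w·x) · x^{−β} · ρ(x) dx | ≤ C/w. -/
open MeasureTheory Real Set Filter

/-- oscillatory-integral bound `|∫_0^K sin(wx) x^{-β} ρ(x) dx| ≤ C/w`. -/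
theorem oscillatory_integral_rho_bound
    (β δ cρ K : ℝ) (hβ : β ∈ Set.Ioo (0:ℝ) 2) (hδ : β < δ) (hcρ : 0 < cρ) (hK : 0 < K)
    (ρ ρ' : ℝ → ℝ)
    (hdiff : ∀ x : ℝ, 0 < x → HasDerivAt ρ (ρ' x) x)
    (hcont : ContinuousOn ρ' (Set.Ioi (0:ℝ)))
    (hbound : ∀ x : ℝ, 0 < x → |ρ x| + x * |ρ' x| ≤ cρ * x ^ δ) :
    ∃ C > 0, ∀ w : ℝ, 0 < w →
      |∫ x in Set.Ioc (0:ℝ) K, Real.sin (w * x) * x ^ (-β) * ρ x| ≤ C / w := by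
  obtain ⟨hβ0, hβ2⟩ := hβ
  set γ : ℝ := δ - β with hγdef
  have hγ0 : 0 < γ := by simp only [hγdef]; linarith
  set g : ℝ → ℝ := fun x => x ^ (-β) * ρ x with hgdef
  set g' : ℝ → ℝ := fun x => (-β) * x ^ (-β - 1) * ρ x + x ^ (-β) * ρ' x with hg'def
  -- basic bounds
  have hρb : ∀ x : ℝ, 0 < x → |ρ x| ≤ cρ * x ^ δ := fun x hx =>
    le_trans (le_add_of_nonneg_right (by positivity)) (hbound x hx)
  have hgb : ∀ x : ℝ, 0 < x → |g x| ≤ cρ * x ^ γ := by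
    intro x hx
    have h1 : |g x| = x ^ (-β) * |ρ x| := by
      rw [hgdef]; rw [abs_mul, abs_of_nonneg (rpow_nonneg hx.le _)]
    rw [h1]
    calc x ^ (-β) * |ρ x| ≤ x ^ (-β) * (cρ * x ^ δ) :=
          mul_le_mul_of_nonneg_left (hρb x hx) (rpow_nonneg hx.le _)
      _ = cρ * x ^ γ := by
          rw [mul_comm (x ^ (-β)), mul_assoc, ← Real.rpow_add hx]
          ring_nf
          rw [hγdef]
  have hg'b : ∀ x : ℝ, 0 < x → |g' x| ≤ (β + 1) * cρ * x ^ (γ - 1) := by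
    intro x hx
    have h1 : |g' x| ≤ β * (x ^ (-β - 1) * |ρ x|) + x ^ (-β - 1) * (x * |ρ' x|) := by
      have habs : |g' x| ≤ |(-β) * x ^ (-β - 1) * ρ x| + |x ^ (-β) * ρ' x| := abs_add_le _ _
      have e1 : |(-β) * x ^ (-β - 1) * ρ x| = β * (x ^ (-β - 1) * |ρ x|) := by
        rw [abs_mul, abs_mul, abs_neg, abs_of_nonneg hβ0.le,
          abs_of_nonneg (rpow_nonneg hx.le _), mul_assoc]
      have e2 : |x ^ (-β) * ρ' x| = x ^ (-β - 1) * (x * |ρ' x|) := by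
        rw [abs_mul, abs_of_nonneg (rpow_nonneg hx.le _)]
        rw [show (-β : ℝ) = (-β - 1) + 1 by ring, Real.rpow_add hx, Real.rpow_one]
        ring
      rw [e1, e2] at habs; exact habs
    have h2 : β * (x ^ (-β - 1) * |ρ x|) + x ^ (-β - 1) * (x * |ρ' x|)
        ≤ (β + 1) * (x ^ (-β - 1) * (|ρ x| + x * |ρ' x|)) := by
      have hxp : (0:ℝ) ≤ x ^ (-β - 1) := rpow_nonneg hx.le _
      have h3 : (0:ℝ) ≤ |ρ x| := abs_nonneg _
      have h4 : (0:ℝ) ≤ x * |ρ' x| := by positivity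
      nlinarith [mul_nonneg hxp h3, mul_nonneg hxp h4]
    have h5 : x ^ (-β - 1) * (|ρ x| + x * |ρ' x|) ≤ x ^ (-β - 1) * (cρ * x ^ δ) :=
      mul_le_mul_of_nonneg_left (hbound x hx) (rpow_nonneg hx.le _)
    have h6 : x ^ (-β - 1) * (cρ * x ^ δ) = cρ * x ^ (γ - 1) := by
      rw [mul_comm (x ^ (-β - 1)), mul_assoc, ← Real.rpow_add hx]
      congr 1
      · congr 1; simp only [hγdef]; ring
    calc |g' x| ≤ (β + 1) * (x ^ (-β - 1) * (|ρ x| + x * |ρ' x|)) := le_trans h1 h2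
      _ ≤ (β + 1) * (cρ * x ^ (γ - 1)) := by
          rw [← h6]; exact mul_le_mul_of_nonneg_left h5 (by linarith)
      _ = (β + 1) * cρ * x ^ (γ - 1) := by ring
  -- g is continuous on [0, K], with g 0 = 0
  have hg0 : g 0 = 0 := by
    simp only [hgdef]
    rw [Real.zero_rpow (by linarith : -β ≠ 0), zero_mul]
  have hρcont : ContinuousOn ρ (Ioi (0:ℝ)) := fun x hx =>
    (hdiff x hx).continuousAt.continuousWithinAt
  have hgcontIoi : ContinuousOn g (Ioi (0:ℝ)) := by
    intro x hx
    exact (((Real.continuousAt_rpow_const x (-β) (Or.inl (ne_of_gt hx))).continuousWithinAt).mul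
      (hρcont x hx))
  have hgcont : ContinuousOn g (Icc 0 K) := by
    intro x hx
    rcases eq_or_lt_of_le hx.1 with h0 | h0
    · -- x = 0
      subst h0
      rw [ContinuousWithinAt, hg0]
      have hbnd : Tendsto (fun y => cρ * y ^ γ) (nhdsWithin 0 (Icc 0 K)) (nhds 0) := by
        have : Tendsto (fun y : ℝ => y ^ γ) (nhds 0) (nhds ((0:ℝ) ^ γ)) :=
          (Real.continuousAt_rpow_const 0 γ (Or.inr hγ0.le))
        rw [Real.zero_rpow (ne_of_gt hγ0)] at this
        have h' : Tendsto (fun y => cρ * y ^ γ) (nhdsWithin 0 (Icc 0 K)) (nhds (cρ * 0)) :=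
          (this.const_mul cρ).mono_left nhdsWithin_le_nhds
        simpa using h'
      apply squeeze_zero_norm' _ hbnd
      filter_upwards [self_mem_nhdsWithin] with y hy
      rcases eq_or_lt_of_le hy.1 with h1 | h1
      · rw [← h1]
        simp [hg0, Real.zero_rpow (ne_of_gt hγ0)]
      · exact hgb y h1
    · exact (((Real.continuousAt_rpow_const x (-β) (Or.inl (ne_of_gt h0))).mul
        (hdiff x h0).continuousAt)).continuousWithinAt
  -- derivative of g on (0, ∞)
  have hgderiv : ∀ x : ℝ, 0 < x → HasDerivAt g (g' x) x := by
    intro x hx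
    have h1 : HasDerivAt (fun y : ℝ => y ^ (-β)) (-β * x ^ (-β - 1)) x :=
      Real.hasDerivAt_rpow_const (Or.inl (ne_of_gt hx))
    exact h1.mul (hdiff x hx)
  -- choose the constant
  refine ⟨cρ * K ^ γ * (1 + (β + 1) / γ), by positivity, ?_⟩
  intro w hw
  set F : ℝ → ℝ := fun x => -Real.cos (w * x) / w * g x with hFdef
  set B : ℝ → ℝ := fun x => -Real.cos (w * x) / w * g' x with hBdef
  set A : ℝ → ℝ := fun x => Real.sin (w * x) * g x with hAdef
  have hF0 : F 0 = 0 := by simp [hFdef, hg0]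
  -- F has derivative A + B on (0, K)
  have hFderiv : ∀ x ∈ Ioo (0:ℝ) K, HasDerivAt F (A x + B x) x := by
    intro x hx
    have h1 : HasDerivAt (fun y : ℝ => w * y) (w * 1) x := (hasDerivAt_id x).const_mul w
    have h2 : HasDerivAt (fun y : ℝ => -Real.cos (w * y) / w) (Real.sin (w * x)) x := by
      have h3 := (h1.cos).neg.div_const w
      exact h3.congr_deriv (by rw [div_eq_iff hw.ne']; ring)
    exact h2.mul (hgderiv x hx.1)
  -- F is continuous on [0, K]
  have hFcont : ContinuousOn F (Icc 0 K) := by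
    apply ContinuousOn.mul _ hgcont
    exact ((Real.continuous_cos.comp (continuous_const.mul continuous_id)).neg.div_const w).continuousOn
  -- A is interval integrable (continuous on [0,K])
  have hAcont : ContinuousOn A (Icc 0 K) := by
    apply ContinuousOn.mul _ hgcont
    exact (Real.continuous_sin.comp (continuous_const.mul continuous_id)).continuousOn
  have hA_int : IntervalIntegrable A volume 0 K := by
    apply ContinuousOn.intervalIntegrable
    rwa [uIcc_of_le hK.le]
  -- bound function for B
  have hrpow_int : IntervalIntegrable (fun x : ℝ => x ^ (γ - 1)) volume 0 K :=
    intervalIntegral.intervalIntegrable_rpow' (by linarith)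
  have hM_int : IntervalIntegrable (fun x : ℝ => (β + 1) * cρ / w * x ^ (γ - 1)) volume 0 K :=
    hrpow_int.const_mul _
  -- B is interval integrable
  have hBcontIoi : ContinuousOn B (Ioi (0:ℝ)) := by
    apply ContinuousOn.mul
    · exact ((Real.continuous_cos.comp (continuous_const.mul continuous_id)).neg.div_const w).continuousOn
    · apply ContinuousOn.add
      · apply ContinuousOn.mul _ hρcont
        exact continuous_const.continuousOn.mul
          (fun x hx => (Real.continuousAt_rpow_const x (-β - 1) (Or.inl (ne_of_gt hx))).continuousWithinAt)
      · exact ContinuousOn.mul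
          (fun x hx => (Real.continuousAt_rpow_const x (-β) (Or.inl (ne_of_gt hx))).continuousWithinAt)
          hcont
  have hBbound : ∀ x ∈ Ioc (0:ℝ) K, ‖B x‖ ≤ (β + 1) * cρ / w * x ^ (γ - 1) := by
    intro x hx
    have h1 : ‖B x‖ = |(-Real.cos (w * x) / w)| * |g' x| := by
      rw [hBdef]; exact abs_mul _ _
    rw [h1]
    have h2 : |(-Real.cos (w * x) / w)| ≤ 1 / w := by
      rw [abs_div, abs_neg, abs_of_pos hw]
      gcongr
      exact Real.abs_cos_le_one _
    calc |(-Real.cos (w * x) / w)| * |g' x| ≤ (1 / w) * ((β + 1) * cρ * x ^ (γ - 1)) :=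
          mul_le_mul h2 (hg'b x hx.1) (abs_nonneg _) (by positivity)
      _ = (β + 1) * cρ / w * x ^ (γ - 1) := by ring
  have hB_int : IntervalIntegrable B volume 0 K := by
    rw [intervalIntegrable_iff_integrableOn_Ioc_of_le hK.le]
    apply Integrable.mono' ((intervalIntegrable_iff_integrableOn_Ioc_of_le hK.le).mp hM_int)
    · exact (hBcontIoi.mono Ioc_subset_Ioi_self).aestronglyMeasurable measurableSet_Ioc
    · filter_upwards [ae_restrict_mem measurableSet_Ioc] with x hx
      exact hBbound x hx
  -- FTC
  have key : ∫ x in (0:ℝ)..K, (A x + B x) = F K - F 0 :=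
    intervalIntegral.integral_eq_sub_of_hasDeriv_right_of_le hK.le hFcont
      (fun x hx => (hFderiv x hx).hasDerivWithinAt) (hA_int.add hB_int)
  have keyA : ∫ x in (0:ℝ)..K, A x = F K - ∫ x in (0:ℝ)..K, B x := by
    have := intervalIntegral.integral_add hA_int hB_int
    rw [this, hF0, sub_zero] at key
    linarith [key]
  -- bound |F K|
  have hFK : |F K| ≤ cρ * K ^ γ / w := by
    have h1 : |F K| = |(-Real.cos (w * K) / w)| * |g K| := abs_mul _ _
    rw [h1]
    have h2 : |(-Real.cos (w * K) / w)| ≤ 1 / w := by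
      rw [abs_div, abs_neg, abs_of_pos hw]
      gcongr
      exact Real.abs_cos_le_one _
    calc |(-Real.cos (w * K) / w)| * |g K| ≤ (1 / w) * (cρ * K ^ γ) :=
          mul_le_mul h2 (hgb K hK) (abs_nonneg _) (by positivity)
      _ = cρ * K ^ γ / w := by ring
  -- bound |∫ B|
  have hintB : |∫ x in (0:ℝ)..K, B x| ≤ (β + 1) * cρ / w * (K ^ γ / γ) := by
    have h1 : |∫ x in (0:ℝ)..K, B x| ≤ ∫ x in (0:ℝ)..K, ‖B x‖ := by
      rw [← Real.norm_eq_abs]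
      exact intervalIntegral.norm_integral_le_integral_norm hK.le
    have h2 : ∫ x in (0:ℝ)..K, ‖B x‖ ≤ ∫ x in (0:ℝ)..K, (β + 1) * cρ / w * x ^ (γ - 1) := by
      apply intervalIntegral.integral_mono_on hK.le hB_int.norm hM_int
      intro x hx
      rcases eq_or_lt_of_le hx.1 with h0 | h0
      · subst h0
        simp only [hBdef, hg0]
        rw [show g' 0 = 0 by
          simp only [hg'def]
          rw [Real.zero_rpow (by linarith : -β - 1 ≠ 0), Real.zero_rpow (by linarith : -β ≠ 0)]
          ring]
        rw [mul_zero, norm_zero]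
        positivity
      · exact hBbound x ⟨h0, hx.2⟩
    have h3 : ∫ x in (0:ℝ)..K, (β + 1) * cρ / w * x ^ (γ - 1)
        = (β + 1) * cρ / w * (K ^ γ / γ) := by
      rw [intervalIntegral.integral_const_mul, integral_rpow (Or.inl (by linarith))]
      rw [show γ - 1 + 1 = γ by ring, Real.zero_rpow (ne_of_gt hγ0), sub_zero]
    linarith [le_trans h1 h2, h3.le, h3.ge]
  -- put it together
  have hIoc : (∫ x in Set.Ioc (0:ℝ) K, Real.sin (w * x) * x ^ (-β) * ρ x)
      = ∫ x in (0:ℝ)..K, A x := by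
    rw [intervalIntegral.integral_of_le hK.le]
    apply setIntegral_congr_fun measurableSet_Ioc
    intro x _
    simp only [hAdef, hgdef]
    ring
  rw [hIoc, keyA]
  have hfinal : |F K - ∫ x in (0:ℝ)..K, B x| ≤ cρ * K ^ γ / w + (β + 1) * cρ / w * (K ^ γ / γ) :=
    le_trans (abs_sub _ _) (add_le_add hFK hintB)
  have heq : cρ * K ^ γ * (1 + (β + 1) / γ) / w
      = cρ * K ^ γ / w + (β + 1) * cρ / w * (K ^ γ / γ) := by
    field_simp
  rw [heq]
  exact hfinal
end

section
/- For each β ∈ (0,2) there exists a constant C > 0 such that for all R > 0: | ∫_0^R (sin x)·x^{−β} dx − β/(2·c_β) | ≤ C·R^{−β}. In particular ∫_0^∞ (sin x)·x^{−β} dx = β/(2·c_β), which equals Γ(1−β)·cos(βπ/2) for β ≠ 1 and π/2 for β = 1. -/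
set_option maxHeartbeats 1000000


open MeasureTheory Real Set Filter

lemma intA {a r : ℝ} (ha : 0 < a) (hr : 0 < r) :
    IntegrableOn (fun t : ℝ => t ^ (a-1) * Real.exp (-(r*t))) (Ioi 0) := by
  have h := Real.GammaIntegral_convergent ha
  have h2 : IntegrableOn (fun x : ℝ => Real.exp (-(r*x)) * (r*x) ^ (a-1)) (Ioi 0) := by
    have := (integrableOn_Ioi_comp_mul_left_iff
      (fun x : ℝ => Real.exp (-x) * x ^ (a-1)) 0 hr).mpr (by simpa using h)
    simpa using this
  have h3 := h2.const_mul (r ^ (1-a))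
  refine IntegrableOn.congr_fun h3 (fun x hx => ?_) measurableSet_Ioi
  have hx0 : 0 < x := hx
  rw [Real.mul_rpow hr.le hx0.le]
  rw [← mul_assoc, ← mul_assoc]
  rw [mul_comm (r ^ (1-a)) (Real.exp (-(r*x)))]
  rw [mul_assoc (Real.exp (-(r*x))), ← Real.rpow_add hr]
  ring_nf
  simp [mul_comm]

lemma inner_int (t R : ℝ) (hR : 0 ≤ R) :
    ∫ x in Ioc (0:ℝ) R, Real.sin x * Real.exp (-(t*x)) =
      (1 - Real.exp (-(t*R)) * (t * Real.sin R + Real.cos R)) / (1 + t^2) := by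
  have ht : (1 + t^2) ≠ 0 := by positivity
  rw [← intervalIntegral.integral_of_le hR]
  have key : ∀ x ∈ Set.uIcc (0:ℝ) R, HasDerivAt
      (fun y : ℝ => -(Real.exp (-(t*y)) * (t * Real.sin y + Real.cos y)) / (1 + t^2))
      (Real.sin x * Real.exp (-(t*x))) x := by
    intro x _
    have h1 : HasDerivAt (fun y : ℝ => -(t*y)) (-t) x := by
      exact (((hasDerivAt_id x).const_mul t).neg).congr_deriv (by simp)
    have h2 := h1.exp
    have h3 : HasDerivAt (fun y : ℝ => t * Real.sin y + Real.cos y)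
        (t * Real.cos x + (- Real.sin x)) x :=
      ((Real.hasDerivAt_sin x).const_mul t).add (Real.hasDerivAt_cos x)
    have h4 := ((h2.mul h3).neg).div_const (1 + t^2)
    refine h4.congr_deriv ?_
    rw [div_eq_iff ht]
    ring
  rw [intervalIntegral.integral_eq_sub_of_hasDerivAt key
    (by apply Continuous.intervalIntegrable; continuity)]
  simp [mul_zero, Real.exp_zero]
  ring

lemma intK_int {a : ℝ} (h0 : 0 < a) (h1 : a < 1) :
    IntegrableOn (fun u : ℝ => u ^ (a-1) / (1+u)) (Ioi 0) := by
  have hsplit : Ioi (0:ℝ) = Ioc 0 1 ∪ Ioi 1 := (Ioc_union_Ioi_eq_Ioi zero_le_one).symm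
  rw [hsplit]
  apply IntegrableOn.union
  · have hbase : IntegrableOn (fun u : ℝ => u ^ (a-1)) (Ioc 0 1) := by
      rw [← intervalIntegrable_iff_integrableOn_Ioc_of_le zero_le_one]
      exact intervalIntegral.intervalIntegrable_rpow' (by linarith)
    refine hbase.mono' ?_ ?_
    · apply Measurable.aestronglyMeasurable
      exact (measurable_id.pow_const (a-1)).div (measurable_const.add measurable_id)
    · filter_upwards [ae_restrict_mem measurableSet_Ioc] with u hu
      have hu0 : 0 < u := hu.1
      rw [Real.norm_eq_abs, abs_of_nonneg (by positivity)]
      rw [div_le_iff₀ (by linarith)]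
      nlinarith [Real.rpow_pos_of_pos hu0 (a-1)]
  · have hbase : IntegrableOn (fun u : ℝ => u ^ (a-2)) (Ioi 1) :=
      integrableOn_Ioi_rpow_of_lt (by linarith) one_pos
    refine hbase.mono' ?_ ?_
    · apply Measurable.aestronglyMeasurable
      exact (measurable_id.pow_const (a-1)).div (measurable_const.add measurable_id)
    · filter_upwards [ae_restrict_mem measurableSet_Ioi] with u hu
      have hu1 : 1 < u := hu
      have hu0 : 0 < u := by linarith
      rw [Real.norm_eq_abs, abs_of_nonneg (by positivity)]
      rw [div_le_iff₀ (by linarith)]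
      have h2 : u ^ (a-1) = u ^ (a-2) * u := by
        rw [← Real.rpow_add_one hu0.ne' (a-2)]; ring_nf
      nlinarith [Real.rpow_pos_of_pos hu0 (a-2)]

lemma exp_int_integrable {b : ℝ} (hb : 0 < b) :
    IntegrableOn (fun s : ℝ => Real.exp (-(b*s))) (Ioi 0) := by
  have := exp_neg_integrableOn_Ioi (0:ℝ) hb
  refine this.congr_fun (fun s _ => ?_) measurableSet_Ioi
  ring_nf

lemma exp_int {b : ℝ} (hb : 0 < b) : ∫ s in Ioi (0:ℝ), Real.exp (-(b*s)) = 1/b := by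
  have h := Real.integral_rpow_mul_exp_neg_mul_Ioi (a := 1) one_pos hb
  simpa [Real.rpow_natCast, Real.Gamma_one] using h

lemma K_val {a : ℝ} (h0 : 0 < a) (h1 : a < 1) :
    ∫ u in Ioi (0:ℝ), u ^ (a-1) / (1+u) = Real.Gamma a * Real.Gamma (1-a) := by
  set F : ℝ → ℝ → ℝ := fun u s => u ^ (a-1) * Real.exp (-((1+u)*s)) with hF
  have hmeas : AEStronglyMeasurable (Function.uncurry F)
      ((volume.restrict (Ioi 0)).prod (volume.restrict (Ioi 0))) := by
    apply Measurable.aestronglyMeasurable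
    exact ((measurable_fst.pow_const (a-1)).mul
      ((((measurable_const.add measurable_fst).mul measurable_snd).neg).exp))
  have hslice : ∀ u : ℝ, 0 < u → Integrable (fun s => F u s) (volume.restrict (Ioi 0)) := by
    intro u hu
    exact (exp_int_integrable (by linarith : (0:ℝ) < 1 + u)).const_mul _
  have hinner : ∀ u : ℝ, 0 < u → (∫ s in Ioi (0:ℝ), F u s) = u ^ (a-1) / (1+u) := by
    intro u hu
    rw [hF]
    simp only
    rw [MeasureTheory.integral_const_mul _ _, exp_int (by linarith : (0:ℝ) < 1 + u)]
    ring
  have hnonneg : ∀ u ∈ Ioi (0:ℝ), ∀ s : ℝ, 0 ≤ F u s := by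
    intro u hu s
    exact mul_nonneg (Real.rpow_nonneg (le_of_lt hu) _) (Real.exp_pos _).le
  have hintF : Integrable (Function.uncurry F)
      ((volume.restrict (Ioi 0)).prod (volume.restrict (Ioi 0))) := by
    rw [MeasureTheory.integrable_prod_iff hmeas]
    constructor
    · filter_upwards [ae_restrict_mem measurableSet_Ioi] with u hu
      exact hslice u hu
    · refine (intK_int h0 h1).congr ?_
      filter_upwards [ae_restrict_mem measurableSet_Ioi] with u hu
      rw [← hinner u hu]
      rw [show (fun s => ‖Function.uncurry F (u, s)‖) = fun s => F u s from ?_]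
      · funext s
        exact Real.norm_of_nonneg (hnonneg u hu s)
  have hswap := MeasureTheory.integral_integral_swap hintF
  have lhs_eq : (∫ u in Ioi (0:ℝ), ∫ s in Ioi (0:ℝ), F u s)
      = ∫ u in Ioi (0:ℝ), u ^ (a-1) / (1+u) :=
    setIntegral_congr_fun measurableSet_Ioi (fun u hu => hinner u hu)
  have rhs_eq : (∫ s in Ioi (0:ℝ), ∫ u in Ioi (0:ℝ), F u s)
      = Real.Gamma a * Real.Gamma (1-a) := by
    have inner2 : ∀ s : ℝ, 0 < s →
        (∫ u in Ioi (0:ℝ), F u s) = Real.Gamma a * (Real.exp (-s) * s ^ (-a)) := by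
      intro s hs
      have e1 : ∀ u ∈ Ioi (0:ℝ), F u s
          = Real.exp (-s) * (u ^ (a-1) * Real.exp (-(s*u))) := by
        intro u _
        rw [hF]
        simp only
        rw [show -((1+u)*s) = -s + -(s*u) by ring, Real.exp_add]
        ring
      rw [setIntegral_congr_fun measurableSet_Ioi e1, MeasureTheory.integral_const_mul _ _,
        Real.integral_rpow_mul_exp_neg_mul_Ioi h0 hs]
      rw [one_div, Real.inv_rpow hs.le, ← Real.rpow_neg hs.le]
      ring
    rw [setIntegral_congr_fun measurableSet_Ioi inner2, MeasureTheory.integral_const_mul _ _]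
    have e2 : ∀ s ∈ Ioi (0:ℝ), Real.exp (-s) * s ^ (-a)
        = s ^ ((1-a)-1) * Real.exp (-(1*s)) := by
      intro s _
      rw [one_mul]
      ring_nf
    rw [setIntegral_congr_fun measurableSet_Ioi e2,
      Real.integral_rpow_mul_exp_neg_mul_Ioi (by linarith : 0 < 1-a) one_pos]
    simp
  rw [← lhs_eq, hswap, rhs_eq]

lemma J_val {β : ℝ} (h0 : 0 < β) (h2 : β < 2) :
    ∫ t in Ioi (0:ℝ), t ^ (β-1) / (1+t^2)
      = Real.Gamma (β/2) * Real.Gamma (1-β/2) / 2 := by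
  have hsub := MeasureTheory.integral_comp_rpow_Ioi
    (fun u : ℝ => u ^ (β/2-1) / (1+u)) (p := 2) two_ne_zero
  have hcong : ∀ x ∈ Ioi (0:ℝ),
      (|(2:ℝ)| * x ^ ((2:ℝ)-1)) • ((x ^ (2:ℝ)) ^ (β/2-1) / (1 + x ^ (2:ℝ)))
        = 2 * (x ^ (β-1) / (1+x^2)) := by
    intro x hx
    have hx0 : 0 < x := hx
    have e1 : x ^ (2:ℝ) = x ^ 2 := by
      rw [← Real.rpow_natCast x 2]; norm_num
    have e2 : (x ^ (2:ℝ)) ^ (β/2-1) = x ^ (β-2) := by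
      rw [← Real.rpow_mul hx0.le]; norm_num; ring_nf
    have e3 : x ^ ((2:ℝ)-1) = x := by
      norm_num
    rw [e2, e1, e3]
    have e4 : x * x ^ (β-2) = x ^ (β-1) := by
      nth_rewrite 1 [← Real.rpow_one x]
      rw [← Real.rpow_add hx0]; ring_nf
    rw [smul_eq_mul, abs_two]
    field_simp
    rw [← e4]
  rw [setIntegral_congr_fun measurableSet_Ioi hcong] at hsub
  rw [MeasureTheory.integral_const_mul _ _] at hsub
  rw [K_val (by linarith) (by linarith)] at hsub
  linarith [hsub]

lemma intJ_int {β : ℝ} (h0 : 0 < β) (h2 : β < 2) :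
    IntegrableOn (fun t : ℝ => t ^ (β-1) / (1+t^2)) (Ioi 0) := by
  have hsplit : Ioi (0:ℝ) = Ioc 0 1 ∪ Ioi 1 := (Ioc_union_Ioi_eq_Ioi zero_le_one).symm
  rw [hsplit]
  apply IntegrableOn.union
  · have hbase : IntegrableOn (fun u : ℝ => u ^ (β-1)) (Ioc 0 1) := by
      rw [← intervalIntegrable_iff_integrableOn_Ioc_of_le zero_le_one]
      exact intervalIntegral.intervalIntegrable_rpow' (by linarith)
    refine hbase.mono' ?_ ?_
    · apply Measurable.aestronglyMeasurable
      exact (measurable_id.pow_const (β-1)).div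
        (measurable_const.add (measurable_id.pow_const (2:ℕ)))
    · filter_upwards [ae_restrict_mem measurableSet_Ioc] with u hu
      have hu0 : 0 < u := hu.1
      rw [Real.norm_eq_abs, abs_of_nonneg (by positivity)]
      rw [div_le_iff₀ (by positivity)]
      nlinarith [Real.rpow_pos_of_pos hu0 (β-1), sq_nonneg u]
  · have hbase : IntegrableOn (fun u : ℝ => u ^ (β-3)) (Ioi 1) :=
      integrableOn_Ioi_rpow_of_lt (by linarith) one_pos
    refine hbase.mono' ?_ ?_
    · apply Measurable.aestronglyMeasurable
      exact (measurable_id.pow_const (β-1)).div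
        (measurable_const.add (measurable_id.pow_const (2:ℕ)))
    · filter_upwards [ae_restrict_mem measurableSet_Ioi] with u hu
      have hu1 : 1 < u := hu
      have hu0 : 0 < u := by linarith
      rw [Real.norm_eq_abs, abs_of_nonneg (by positivity)]
      rw [div_le_iff₀ (by positivity)]
      have h3 : u ^ (β-1) = u ^ (β-3) * u^2 := by
        rw [← Real.rpow_natCast u 2, ← Real.rpow_add hu0]
        norm_num
        ring_nf
      nlinarith [Real.rpow_pos_of_pos hu0 (β-3), sq_nonneg u]

lemma intA' {β : ℝ} (h0 : 0 < β) {x : ℝ} (hx : 0 < x) :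
    IntegrableOn (fun t : ℝ => t ^ (β-1) * Real.exp (-(t*x))) (Ioi 0) :=
  IntegrableOn.congr_fun (intA h0 hx) (fun t _ => by rw [mul_comm x t]) measurableSet_Ioi

lemma intA'_val {β : ℝ} (h0 : 0 < β) {x : ℝ} (hx : 0 < x) :
    ∫ t in Ioi (0:ℝ), t ^ (β-1) * Real.exp (-(t*x)) = x ^ (-β) * Real.Gamma β := by
  have h := Real.integral_rpow_mul_exp_neg_mul_Ioi h0 hx
  rw [setIntegral_congr_fun measurableSet_Ioi
    (fun t _ => by rw [mul_comm x t] : ∀ t ∈ Ioi (0:ℝ),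
      t ^ (β-1) * Real.exp (-(t*x)) = t ^ (β-1) * Real.exp (-(x*t))), h,
    one_div, Real.inv_rpow hx.le, ← Real.rpow_neg hx.le]

lemma main_fubini {β R : ℝ} (h0 : 0 < β) (h2 : β < 2) (hR : 0 < R) :
    Real.Gamma β * ∫ x in Ioc (0:ℝ) R, Real.sin x * x ^ (-β)
      = ∫ t in Ioi (0:ℝ), t ^ (β-1) *
          ((1 - Real.exp (-(t*R)) * (t * Real.sin R + Real.cos R)) / (1 + t^2)) := by
  set F : ℝ → ℝ → ℝ := fun x t => Real.sin x * (t ^ (β-1) * Real.exp (-(t*x))) with hFdef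
  set μ := volume.restrict (Ioc (0:ℝ) R)
  set ν := volume.restrict (Ioi (0:ℝ))
  have hmeas : AEStronglyMeasurable (Function.uncurry F) (μ.prod ν) := by
    apply Measurable.aestronglyMeasurable
    exact (Real.measurable_sin.comp measurable_fst).mul
      ((measurable_snd.pow_const (β-1)).mul ((measurable_snd.mul measurable_fst).neg.exp))
  have hinner : ∀ x : ℝ, 0 < x →
      (∫ t, F x t ∂ν) = Real.sin x * (x ^ (-β) * Real.Gamma β) := by
    intro x hx
    rw [hFdef]
    simp only
    rw [MeasureTheory.integral_const_mul _ _, intA'_val h0 hx]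
  have hnormint : ∀ x : ℝ, 0 < x →
      (∫ t, ‖F x t‖ ∂ν) = |Real.sin x| * (x ^ (-β) * Real.Gamma β) := by
    intro x hx
    have : ∀ t ∈ Ioi (0:ℝ), ‖F x t‖ = |Real.sin x| * (t ^ (β-1) * Real.exp (-(t*x))) := by
      intro t ht
      rw [hFdef]
      simp only [Real.norm_eq_abs, abs_mul]
      rw [abs_of_nonneg (Real.rpow_nonneg (le_of_lt ht) (β-1)),
        abs_of_nonneg (Real.exp_pos (-(t*x))).le]
    rw [show (∫ t, ‖F x t‖ ∂ν) = ∫ t in Ioi (0:ℝ), ‖F x t‖ from rfl,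
      setIntegral_congr_fun measurableSet_Ioi this,
      MeasureTheory.integral_const_mul _ _, intA'_val h0 hx]
  have hintF : Integrable (Function.uncurry F) (μ.prod ν) := by
    rw [MeasureTheory.integrable_prod_iff hmeas]
    constructor
    · filter_upwards [ae_restrict_mem measurableSet_Ioc] with x hx
      have h : Integrable (fun t : ℝ => Real.sin x * (t ^ (β-1) * Real.exp (-(t*x)))) ν :=
        (intA' h0 hx.1).const_mul (Real.sin x)
      exact h
    · have hg : Integrable (fun x : ℝ => |Real.sin x| * (x ^ (-β) * Real.Gamma β)) μ := by
        have hb0 : IntegrableOn (fun x : ℝ => x ^ (1-β)) (Ioc 0 R) := by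
          rw [← intervalIntegrable_iff_integrableOn_Ioc_of_le hR.le]
          exact intervalIntegral.intervalIntegrable_rpow' (by linarith)
        have hbase : IntegrableOn (fun x : ℝ => x ^ (1-β) * Real.Gamma β) (Ioc 0 R) :=
          hb0.mul_const (Real.Gamma β)
        refine hbase.mono' ?_ ?_
        · apply Measurable.aestronglyMeasurable
          exact (Real.measurable_sin.abs).mul
            ((measurable_id.pow_const (-β)).mul measurable_const)
        · filter_upwards [ae_restrict_mem measurableSet_Ioc] with x hx
          have hx0 : 0 < x := hx.1
          have hsin : |Real.sin x| ≤ x := by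
            have := Real.abs_sin_le_abs (x := x)
            rwa [abs_of_pos hx0] at this
          rw [Real.norm_eq_abs, abs_of_nonneg (by positivity)]
          have hx1 : x ^ (1-β) = x * x ^ (-β) := by
            nth_rewrite 2 [← Real.rpow_one x]
            rw [← Real.rpow_add hx0]
            ring_nf
          rw [hx1, mul_assoc]
          exact mul_le_mul_of_nonneg_right hsin
            (mul_nonneg (Real.rpow_nonneg hx0.le (-β)) (Real.Gamma_pos_of_pos h0).le)
      refine hg.congr ?_
      filter_upwards [ae_restrict_mem measurableSet_Ioc] with x hx
      exact (hnormint x hx.1).symm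
  have hswap := MeasureTheory.integral_integral_swap hintF
  have lhs_eq : (∫ x, ∫ t, F x t ∂ν ∂μ)
      = Real.Gamma β * ∫ x in Ioc (0:ℝ) R, Real.sin x * x ^ (-β) := by
    rw [show (∫ x, ∫ t, F x t ∂ν ∂μ) = ∫ x in Ioc (0:ℝ) R, ∫ t, F x t ∂ν from rfl]
    rw [setIntegral_congr_fun measurableSet_Ioc
      (fun x hx => by rw [hinner x hx.1]; ring :
        ∀ x ∈ Ioc (0:ℝ) R, (∫ t, F x t ∂ν)
          = Real.Gamma β * (Real.sin x * x ^ (-β)))]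
    rw [MeasureTheory.integral_const_mul _ _]
  have rhs_eq : (∫ t, ∫ x, F x t ∂μ ∂ν)
      = ∫ t in Ioi (0:ℝ), t ^ (β-1) *
          ((1 - Real.exp (-(t*R)) * (t * Real.sin R + Real.cos R)) / (1 + t^2)) := by
    rw [show (∫ t, ∫ x, F x t ∂μ ∂ν) = ∫ t in Ioi (0:ℝ), ∫ x in Ioc (0:ℝ) R, F x t from rfl]
    refine setIntegral_congr_fun measurableSet_Ioi (fun t ht => ?_)
    rw [show (fun x => F x t) = fun x => t ^ (β-1) * (Real.sin x * Real.exp (-(t*x))) from ?_]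
    · rw [MeasureTheory.integral_const_mul _ _, inner_int t R hR.le]
    · funext x; rw [hFdef]; simp only; ring
  rw [← lhs_eq, hswap, rhs_eq]

lemma intE_int {β R : ℝ} (h0 : 0 < β) (hR : 0 < R) :
    IntegrableOn (fun t : ℝ => t ^ (β-1) *
      (Real.exp (-(t*R)) * (t * Real.sin R + Real.cos R) / (1 + t^2))) (Ioi 0) := by
  have hg : IntegrableOn (fun t : ℝ => 2 * (t ^ (β-1) * Real.exp (-(t*R)))) (Ioi 0) :=
    (intA' h0 hR).const_mul 2
  refine hg.mono' ?_ ?_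
  · apply Measurable.aestronglyMeasurable
    exact (measurable_id.pow_const (β-1)).mul
      ((((measurable_id.mul measurable_const).neg.exp).mul
        ((measurable_id.mul measurable_const).add measurable_const)).div
        (measurable_const.add (measurable_id.pow_const (2:ℕ))))
  · filter_upwards [ae_restrict_mem measurableSet_Ioi] with t ht
    have ht0 : 0 < t := ht
    have h1 : |t * Real.sin R + Real.cos R| ≤ t + 1 := by
      calc |t * Real.sin R + Real.cos R| ≤ |t * Real.sin R| + |Real.cos R| := abs_add_le _ _
        _ ≤ t * 1 + 1 := by
            gcongr
            · rw [abs_mul, abs_of_pos ht0]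
              exact mul_le_mul_of_nonneg_left (Real.abs_sin_le_one R) ht0.le
            · exact Real.abs_cos_le_one R
        _ = t + 1 := by ring
    have h2 : t + 1 ≤ 2 * (1 + t^2) := by nlinarith [sq_nonneg (t-1)]
    rw [Real.norm_eq_abs, abs_mul, abs_of_nonneg (Real.rpow_nonneg ht0.le (β-1)),
      abs_div, abs_of_pos (by positivity : (0:ℝ) < 1 + t^2), abs_mul,
      abs_of_pos (Real.exp_pos _)]
    rw [← mul_div_assoc, div_le_iff₀ (by positivity : (0:ℝ) < 1 + t^2)]
    have hrp := Real.rpow_nonneg ht0.le (β-1)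
    have hep := (Real.exp_pos (-(t*R))).le
    calc t ^ (β-1) * (Real.exp (-(t*R)) * |t * Real.sin R + Real.cos R|)
        ≤ t ^ (β-1) * (Real.exp (-(t*R)) * (2 * (1+t^2))) := by
          gcongr
          linarith
      _ = 2 * (t ^ (β-1) * Real.exp (-(t*R))) * (1+t^2) := by ring

lemma E_bound {β R : ℝ} (h0 : 0 < β) (hR : 0 < R) :
    |∫ t in Ioi (0:ℝ), t ^ (β-1) *
      (Real.exp (-(t*R)) * (t * Real.sin R + Real.cos R) / (1 + t^2))|
      ≤ 2 * (R ^ (-β) * Real.Gamma β) := by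
  have hg : Integrable (fun t : ℝ => 2 * (t ^ (β-1) * Real.exp (-(t*R))))
      (volume.restrict (Ioi 0)) := (intA' h0 hR).const_mul 2
  have hbnd : ∀ᵐ t ∂(volume.restrict (Ioi (0:ℝ))),
      ‖t ^ (β-1) * (Real.exp (-(t*R)) * (t * Real.sin R + Real.cos R) / (1 + t^2))‖
        ≤ 2 * (t ^ (β-1) * Real.exp (-(t*R))) := by
    filter_upwards [ae_restrict_mem measurableSet_Ioi] with t ht
    have ht0 : 0 < t := ht
    have h1 : |t * Real.sin R + Real.cos R| ≤ t + 1 := by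
      calc |t * Real.sin R + Real.cos R| ≤ |t * Real.sin R| + |Real.cos R| := abs_add_le _ _
        _ ≤ t * 1 + 1 := by
            gcongr
            · rw [abs_mul, abs_of_pos ht0]
              exact mul_le_mul_of_nonneg_left (Real.abs_sin_le_one R) ht0.le
            · exact Real.abs_cos_le_one R
        _ = t + 1 := by ring
    have h2 : t + 1 ≤ 2 * (1 + t^2) := by nlinarith [sq_nonneg (t-1)]
    rw [Real.norm_eq_abs, abs_mul, abs_of_nonneg (Real.rpow_nonneg ht0.le (β-1)),
      abs_div, abs_of_pos (by positivity : (0:ℝ) < 1 + t^2), abs_mul,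
      abs_of_pos (Real.exp_pos _)]
    rw [← mul_div_assoc, div_le_iff₀ (by positivity : (0:ℝ) < 1 + t^2)]
    calc t ^ (β-1) * (Real.exp (-(t*R)) * |t * Real.sin R + Real.cos R|)
        ≤ t ^ (β-1) * (Real.exp (-(t*R)) * (2 * (1+t^2))) := by
          gcongr
          linarith
      _ = 2 * (t ^ (β-1) * Real.exp (-(t*R))) * (1+t^2) := by ring
  have hb := MeasureTheory.norm_integral_le_of_norm_le hg hbnd
  rw [Real.norm_eq_abs] at hb
  calc |∫ t in Ioi (0:ℝ), t ^ (β-1) *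
      (Real.exp (-(t*R)) * (t * Real.sin R + Real.cos R) / (1 + t^2))|
      ≤ ∫ t in Ioi (0:ℝ), 2 * (t ^ (β-1) * Real.exp (-(t*R))) := hb
    _ = 2 * (R ^ (-β) * Real.Gamma β) := by
        rw [MeasureTheory.integral_const_mul _ _, intA'_val h0 hR]

lemma key_bound {β R : ℝ} (h0 : 0 < β) (h2 : β < 2) (hR : 0 < R) :
    |(∫ x in Ioc (0:ℝ) R, Real.sin x * x ^ (-β))
      - π / (2 * Real.sin (π * (β/2)) * Real.Gamma β)| ≤ 2 * R ^ (-β) := by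
  have hΓ : 0 < Real.Gamma β := Real.Gamma_pos_of_pos h0
  have hs : 0 < Real.sin (π * (β/2)) := by
    apply Real.sin_pos_of_pos_of_lt_pi
    · positivity
    · nlinarith [Real.pi_pos]
  have hmf := main_fubini h0 h2 hR
  have hsplit : (∫ t in Ioi (0:ℝ), t ^ (β-1) *
      ((1 - Real.exp (-(t*R)) * (t * Real.sin R + Real.cos R)) / (1 + t^2)))
      = (∫ t in Ioi (0:ℝ), t ^ (β-1) / (1+t^2))
        - ∫ t in Ioi (0:ℝ), t ^ (β-1) *
            (Real.exp (-(t*R)) * (t * Real.sin R + Real.cos R) / (1 + t^2)) := by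
    rw [← MeasureTheory.integral_sub (intJ_int h0 h2) (intE_int h0 hR)]
    refine setIntegral_congr_fun measurableSet_Ioi (fun t _ => ?_)
    ring
  have hJ : (∫ t in Ioi (0:ℝ), t ^ (β-1) / (1+t^2))
      = π / (2 * Real.sin (π * (β/2))) := by
    rw [J_val h0 h2, Real.Gamma_mul_Gamma_one_sub (β/2)]
    ring
  rw [hsplit, hJ] at hmf
  set E := ∫ t in Ioi (0:ℝ), t ^ (β-1) *
      (Real.exp (-(t*R)) * (t * Real.sin R + Real.cos R) / (1 + t^2)) with hE
  have hIe : (∫ x in Ioc (0:ℝ) R, Real.sin x * x ^ (-β))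
      = (π / (2 * Real.sin (π * (β/2))) - E) / Real.Gamma β := by
    rw [eq_div_iff hΓ.ne']
    linear_combination hmf
  have hI : (∫ x in Ioc (0:ℝ) R, Real.sin x * x ^ (-β))
      - π / (2 * Real.sin (π * (β/2)) * Real.Gamma β) = -E / Real.Gamma β := by
    rw [hIe]
    ring
  rw [hI]
  have hEb := E_bound h0 hR
  rw [abs_div, abs_neg, abs_of_pos hΓ, div_le_iff₀ hΓ]
  calc |E| ≤ 2 * (R ^ (-β) * Real.Gamma β) := hEb
    _ = 2 * R ^ (-β) * Real.Gamma β := by ring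

lemma value_id (β cβ : ℝ) (hβ : β ∈ Set.Ioo (0:ℝ) 2)
    (hcβ : β ≠ 1 → cβ = (1/2) * ((1/β) * Real.Gamma (1 - β) * Real.cos (β * π / 2))⁻¹)
    (hcβ1 : β = 1 → cβ = 1 / π) :
    β / (2 * cβ) = π / (2 * Real.sin (π * (β/2)) * Real.Gamma β) := by
  obtain ⟨h0, h2⟩ := hβ
  have hΓ : 0 < Real.Gamma β := Real.Gamma_pos_of_pos h0
  have hs : 0 < Real.sin (π * (β/2)) := by
    apply Real.sin_pos_of_pos_of_lt_pi
    · positivity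
    · nlinarith [Real.pi_pos]
  by_cases hne : β = 1
  · subst hne
    rw [hcβ1 rfl]
    rw [show π * ((1:ℝ)/2) = π/2 by ring, Real.sin_pi_div_two, Real.Gamma_one]
    have hπ : (0:ℝ) < π := Real.pi_pos
    field_simp
  · have hcosarg : Real.cos (β * π / 2) = Real.cos (π * (β/2)) := by
      rw [show β * π / 2 = π * (β/2) by ring]
    have hc : Real.cos (π * (β/2)) ≠ 0 := by
      rcases lt_or_gt_of_ne hne with h | h
      · have : 0 < Real.cos (π * (β/2)) := by
          apply Real.cos_pos_of_mem_Ioo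
          constructor
          · nlinarith [Real.pi_pos]
          · nlinarith [Real.pi_pos]
        exact this.ne'
      · have : Real.cos (π * (β/2)) < 0 := by
          apply Real.cos_neg_of_pi_div_two_lt_of_lt
          · nlinarith [Real.pi_pos]
          · nlinarith [Real.pi_pos]
        exact this.ne
    have hlhs : β / (2 * cβ) = Real.Gamma (1-β) * Real.cos (π * (β/2)) := by
      rw [hcβ hne]
      rw [show 2 * ((1/2:ℝ) * ((1/β) * Real.Gamma (1-β) * Real.cos (β * π / 2))⁻¹)
        = ((1/β) * Real.Gamma (1-β) * Real.cos (β * π / 2))⁻¹ from by ring]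
      rw [div_eq_mul_inv, inv_inv, hcosarg]
      field_simp
    rw [hlhs]
    have hG := Real.Gamma_mul_Gamma_one_sub β
    have hsin2 : Real.sin (π * β) = 2 * Real.sin (π * (β/2)) * Real.cos (π * (β/2)) := by
      rw [show π * β = 2 * (π * (β/2)) by ring, Real.sin_two_mul]
    rw [hsin2] at hG
    have h2sc : (2 * Real.sin (π * (β/2)) * Real.cos (π * (β/2))) ≠ 0 := by
      intro h
      rcases mul_eq_zero.1 h with h' | h'
      · rcases mul_eq_zero.1 h' with h'' | h''
        · norm_num at h''
        · exact hs.ne' h''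
      · exact hc h'
    rw [eq_div_iff h2sc] at hG
    rw [eq_div_iff (by positivity : (2 * Real.sin (π * (β/2)) * Real.Gamma β) ≠ 0)]
    linear_combination hG

/-- rate of convergence of the truncated sine integral
`∫_0^R sin(x) x^{-β} dx` to `β/(2c_β)`, with the limit itself. -/
theorem sine_integral_rate
    (β cβ : ℝ) (hβ : β ∈ Set.Ioo (0:ℝ) 2)
    (hcβ : β ≠ 1 → cβ = (1/2) * ((1/β) * Real.Gamma (1 - β) * Real.cos (β * π / 2))⁻¹)
    (hcβ1 : β = 1 → cβ = 1 / π) :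
    (∃ C > 0, ∀ R : ℝ, 0 < R →
      |(∫ x in Set.Ioc (0:ℝ) R, Real.sin x * x ^ (-β)) - β / (2 * cβ)| ≤ C * R ^ (-β)) ∧
    Filter.Tendsto (fun R : ℝ => ∫ x in Set.Ioc (0:ℝ) R, Real.sin x * x ^ (-β))
      Filter.atTop (nhds (β / (2 * cβ))) := by
  obtain ⟨h0, h2⟩ := hβ
  have hval := value_id β cβ ⟨h0, h2⟩ hcβ hcβ1
  set L := β / (2 * cβ) with hL
  have hkey : ∀ R : ℝ, 0 < R →
      |(∫ x in Set.Ioc (0:ℝ) R, Real.sin x * x ^ (-β)) - L| ≤ 2 * R ^ (-β) := by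
    intro R hR
    rw [hval]
    exact key_bound h0 h2 hR
  constructor
  · exact ⟨2, two_pos, hkey⟩
  · have hg0 : Tendsto (fun R : ℝ => 2 * R ^ (-β)) atTop (nhds 0) := by
      have := (tendsto_rpow_neg_atTop h0).const_mul (2:ℝ)
      simpa using this
    have hdiff : Tendsto
        (fun R : ℝ => (∫ x in Set.Ioc (0:ℝ) R, Real.sin x * x ^ (-β)) - L)
        atTop (nhds 0) := by
      apply squeeze_zero_norm' _ hg0
      filter_upwards [eventually_gt_atTop (0:ℝ)] with R hR
      rw [Real.norm_eq_abs]
      exact hkey R hR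
    have := hdiff.add_const L
    simpa using this
end

section
/- For every r ∈ (0,1] and every b > 0: ∫_0^b |f(y) − g(y)| dy ≤ ( b^r / (π·r) ) · ∫_0^∞ u^r · |φ'(u) − ψ'(u)| du. -/
open MeasureTheory Real Set Filter Topology

lemma abs_sin_le_rpow {r : ℝ} (hr0 : 0 < r) (hr1 : r ≤ 1) {x : ℝ} (hx : 0 ≤ x) :
    |Real.sin x| ≤ x ^ r := by
  rcases eq_or_lt_of_le hx with h | hx0
  · simp [← h, Real.zero_rpow hr0.ne']
  rcases le_or_gt x 1 with h | h
  · calc |Real.sin x| ≤ |x| := Real.abs_sin_le_abs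
      _ = x ^ (1:ℝ) := by rw [abs_of_pos hx0, Real.rpow_one]
      _ ≤ x ^ r := Real.rpow_le_rpow_of_exponent_ge hx0 h hr1
  · calc |Real.sin x| ≤ 1 := abs_sin_le_one x
      _ ≤ x ^ r := Real.one_le_rpow h.le hr0.le

lemma exists_small_mul_abs (h : ℝ → ℝ) (hh : IntegrableOn h (Ioo (0:ℝ) 1))
    {δ c : ℝ} (hδ : 0 < δ) (hδ1 : δ ≤ 1) (hc : 0 < c) :
    ∃ ε, 0 < ε ∧ ε < δ ∧ ε * |h ε| < c := by
  by_contra hcon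
  push_neg at hcon
  have hmono : IntegrableOn h (Ioo (0:ℝ) δ) :=
    hh.mono_set (Ioo_subset_Ioo le_rfl hδ1)
  have hInt : IntegrableOn (fun u : ℝ => u ^ (-1:ℝ)) (Ioo (0:ℝ) δ) := by
    apply Integrable.mono' (hmono.abs.const_mul c⁻¹)
    · exact (ContinuousOn.aestronglyMeasurable
        (fun u hu => ((Real.continuousAt_rpow_const u (-1) (Or.inl (ne_of_gt hu.1))).continuousWithinAt))
        measurableSet_Ioo)
    · filter_upwards [ae_restrict_mem measurableSet_Ioo] with u hu
      have hu0 : 0 < u := hu.1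
      have hle := hcon u hu0 hu.2
      rw [Real.rpow_neg_one, Real.norm_eq_abs, abs_of_pos (inv_pos.2 hu0)]
      have hle' : c / u ≤ |h u| := (div_le_iff₀ hu0).2 (by linarith [hle, mul_comm u |h u|])
      calc u⁻¹ = c⁻¹ * (c / u) := by field_simp
        _ ≤ c⁻¹ * |h u| := mul_le_mul_of_nonneg_left hle' (inv_pos.2 hc).le
  rw [intervalIntegral.integrableOn_Ioo_rpow_iff hδ] at hInt
  linarith

/-- local L¹ bound between Fourier inversions of two even integrable functions
in terms of the weighted L¹ distance of their derivatives:
`∫_0^b |f - g| ≤ (b^r/(π r)) ∫_0^∞ u^r |φ' - ψ'| du`. -/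
theorem fourier_inversion_L1_derivative_bound
    (r : ℝ) (hr : r ∈ Set.Ioc (0:ℝ) 1)
    (φ ψ : ℝ → ℝ)
    (hφeven : ∀ u : ℝ, φ (-u) = φ u) (hψeven : ∀ u : ℝ, ψ (-u) = ψ u)
    (hφint : Integrable φ) (hψint : Integrable ψ)
    (φ' ψ' : ℝ → ℝ)
    (hφd : ∀ u : ℝ, 0 < u → HasDerivAt φ (φ' u) u)
    (hψd : ∀ u : ℝ, 0 < u → HasDerivAt ψ (ψ' u) u)
    (hφ'c : ContinuousOn φ' (Set.Ioi (0:ℝ))) (hψ'c : ContinuousOn ψ' (Set.Ioi (0:ℝ)))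
    (hφ0 : Filter.Tendsto φ Filter.atTop (nhds 0))
    (hψ0 : Filter.Tendsto ψ Filter.atTop (nhds 0))
    (hint : IntegrableOn (fun u : ℝ => u ^ r * (|φ' u| + |ψ' u|)) (Set.Ioi (0:ℝ)))
    (f g : ℝ → ℝ)
    (hf : ∀ y : ℝ, f y
      = (2 * π)⁻¹ * (∫ u : ℝ, Complex.exp (-(Complex.I * (u:ℂ) * (y:ℂ))) * (φ u : ℂ)).re)
    (hg : ∀ y : ℝ, g y
      = (2 * π)⁻¹ * (∫ u : ℝ, Complex.exp (-(Complex.I * (u:ℂ) * (y:ℂ))) * (ψ u : ℂ)).re) :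
    ∀ b : ℝ, 0 < b →
      ∫ y in Set.Ioc (0:ℝ) b, |f y - g y|
        ≤ (b ^ r / (π * r)) * ∫ u in Set.Ioi (0:ℝ), u ^ r * |φ' u - ψ' u| := by
  obtain ⟨hr0, hr1⟩ := hr
  intro b hb
  have hπ : (0:ℝ) < π := Real.pi_pos
  have hhint : Integrable (fun u => φ u - ψ u) := hφint.sub hψint
  set M : ℝ := ∫ u in Set.Ioi (0:ℝ), u ^ r * |φ' u - ψ' u| with hM_def
  -- weighted integrability of |φ' - ψ'|
  have hWmeas : AEStronglyMeasurable (fun u : ℝ => u ^ r * |φ' u - ψ' u|)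
      (volume.restrict (Ioi 0)) := by
    apply ContinuousOn.aestronglyMeasurable _ measurableSet_Ioi
    exact (continuousOn_id.rpow_const (fun x hx => Or.inl (ne_of_gt hx))).mul ((hφ'c.sub hψ'c).abs)
  have hW : IntegrableOn (fun u : ℝ => u ^ r * |φ' u - ψ' u|) (Ioi 0) := by
    apply hint.mono' hWmeas
    filter_upwards [ae_restrict_mem measurableSet_Ioi] with u hu
    have h1 : (0:ℝ) ≤ u ^ r := Real.rpow_nonneg (le_of_lt hu) r
    rw [Real.norm_eq_abs, abs_of_nonneg (mul_nonneg h1 (abs_nonneg _))]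
    exact mul_le_mul_of_nonneg_left (abs_sub _ _) h1
  have hM0 : 0 ≤ M := setIntegral_nonneg measurableSet_Ioi
    (fun u hu => mul_nonneg (Real.rpow_nonneg (le_of_lt hu) r) (abs_nonneg _))
  -- pointwise key bound
  have key : ∀ y : ℝ, 0 < y → |f y - g y| ≤ π⁻¹ * y ^ (r-1) * M := by
    intro y hy
    set G : ℝ → ℝ := fun u => Real.cos (u*y) * (φ u - ψ u) with hG_def
    set S : ℝ → ℝ := fun u => Real.sin (u*y) * (φ' u - ψ' u) with hS_def
    set F : ℝ → ℝ := fun u => Real.sin (u*y) / y * (φ u - ψ u) with hF_def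
    -- representation of f y - g y
    have hexpm : ∀ ρ : ℝ → ℝ, Integrable ρ →
        Integrable (fun u : ℝ => Complex.exp (-(Complex.I * (u:ℂ) * (y:ℂ))) * (ρ u : ℂ)) := by
      intro ρ hρ
      apply Integrable.bdd_mul (c := 1) hρ.ofReal
      · apply Continuous.aestronglyMeasurable
        exact Complex.continuous_exp.comp (by continuity)
      · refine Eventually.of_forall fun u => ?_
        have h0 : (-(Complex.I * (u:ℂ) * (y:ℂ))).re = 0 := by simp
        rw [Complex.norm_exp, h0, Real.exp_zero]
    have hre : ∀ u : ℝ, (Complex.exp (-(Complex.I * (u:ℂ) * (y:ℂ))) * ((φ u - ψ u : ℝ):ℂ)).re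
        = G u := by
      intro u
      have he : -(Complex.I * (u:ℂ) * (y:ℂ)) = ((-(u * y) : ℝ) : ℂ) * Complex.I := by
        push_cast; ring
      have h1 : (Complex.exp (((-(u * y) : ℝ) : ℂ) * Complex.I)).re = Real.cos (u*y) := by
        rw [Complex.exp_ofReal_mul_I_re, Real.cos_neg]
      rw [he, Complex.mul_re, h1, Complex.ofReal_re, Complex.ofReal_im, mul_zero, sub_zero]
    have hiφ := hexpm φ hφint
    have hiψ := hexpm ψ hψint
    have hrep : f y - g y = π⁻¹ * ∫ u in Ioi (0:ℝ), G u := by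
      have e1 : f y - g y = (2*π)⁻¹ * (∫ u : ℝ,
          (Complex.exp (-(Complex.I * (u:ℂ) * (y:ℂ))) * (φ u:ℂ)
            - Complex.exp (-(Complex.I * (u:ℂ) * (y:ℂ))) * (ψ u:ℂ))).re := by
        have hsub := integral_sub hiφ hiψ
        rw [hf y, hg y, ← mul_sub, ← Complex.sub_re, ← hsub]
      have e2 : (∫ u : ℝ,
          (Complex.exp (-(Complex.I * (u:ℂ) * (y:ℂ))) * (φ u:ℂ)
            - Complex.exp (-(Complex.I * (u:ℂ) * (y:ℂ))) * (ψ u:ℂ))).re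
          = ∫ u : ℝ, G u := by
        have h4 := Complex.reCLM.integral_comp_comm (hiφ.sub hiψ)
        simp only [Complex.reCLM_apply, Pi.sub_apply] at h4
        rw [← h4]
        refine integral_congr_ae (Eventually.of_forall fun u => ?_)
        show (Complex.exp (-(Complex.I * (u:ℂ) * (y:ℂ))) * (φ u:ℂ)
            - Complex.exp (-(Complex.I * (u:ℂ) * (y:ℂ))) * (ψ u:ℂ)).re = G u
        have he : Complex.exp (-(Complex.I * (u:ℂ) * (y:ℂ))) * (φ u:ℂ)
            - Complex.exp (-(Complex.I * (u:ℂ) * (y:ℂ))) * (ψ u:ℂ)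
            = Complex.exp (-(Complex.I * (u:ℂ) * (y:ℂ))) * ((φ u - ψ u : ℝ):ℂ) := by
          push_cast; ring
        rw [he, hre u]
      have e3 : ∫ u : ℝ, G u = 2 * ∫ u in Ioi (0:ℝ), G u := by
        have hGeven : ∀ u : ℝ, G |u| = G u := by
          intro u
          rcases abs_cases u with ⟨heq, _⟩ | ⟨heq, _⟩
          · rw [heq]
          · rw [heq, hG_def]
            simp only []
            rw [neg_mul, Real.cos_neg, hφeven, hψeven]
        calc ∫ u : ℝ, G u = ∫ u : ℝ, G |u| := by simp_rw [hGeven]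
          _ = 2 * ∫ u in Ioi (0:ℝ), G u := integral_comp_abs
      rw [e1, e2, e3]
      field_simp
    -- integrability facts
    have hGint : Integrable G := by
      apply Integrable.bdd_mul (c := 1) hhint
      · exact (Real.continuous_cos.comp (continuous_id.mul continuous_const)).aestronglyMeasurable
      · exact Eventually.of_forall fun u => by rw [Real.norm_eq_abs]; exact abs_cos_le_one _
    have hSmeas : AEStronglyMeasurable S (volume.restrict (Ioi 0)) := by
      apply ContinuousOn.aestronglyMeasurable _ measurableSet_Ioi
      exact ((Real.continuous_sin.comp (continuous_id.mul continuous_const)).continuousOn).mul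
        (hφ'c.sub hψ'c)
    have hSle : ∀ u ∈ Ioi (0:ℝ), ‖S u‖ ≤ y ^ r * (u ^ r * |φ' u - ψ' u|) := by
      intro u hu
      have hu0 : (0:ℝ) < u := hu
      have hsin : |Real.sin (u*y)| ≤ u ^ r * y ^ r := by
        calc |Real.sin (u*y)| ≤ (u*y) ^ r :=
          abs_sin_le_rpow hr0 hr1 (mul_nonneg hu0.le hy.le)
        _ = u ^ r * y ^ r := Real.mul_rpow hu0.le hy.le
      rw [Real.norm_eq_abs, hS_def]
      simp only []
      rw [abs_mul]
      calc |Real.sin (u*y)| * |φ' u - ψ' u| ≤ (u ^ r * y ^ r) * |φ' u - ψ' u| :=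
        mul_le_mul_of_nonneg_right hsin (abs_nonneg _)
      _ = y ^ r * (u ^ r * |φ' u - ψ' u|) := by ring
    have hSint : IntegrableOn S (Ioi 0) := by
      apply Integrable.mono' (hW.const_mul (y ^ r)) hSmeas
      filter_upwards [ae_restrict_mem measurableSet_Ioi] with u hu
      exact hSle u hu
    -- derivative of F
    have hFd : ∀ u ∈ Ioi (0:ℝ), HasDerivAt F (G u + y⁻¹ * S u) u := by
      intro u hu
      have h1 : HasDerivAt (fun v : ℝ => Real.sin (v*y)) (Real.cos (u*y) * y) u := by
        have h := (Real.hasDerivAt_sin (u*y)).comp u ((hasDerivAt_id u).mul_const y); rw [one_mul] at h; exact h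
      have h2 := (h1.div_const y).mul ((hφd u hu).sub (hψd u hu))
      have h3 : HasDerivAt F (Real.cos (u*y) * y / y * (φ u - ψ u)
          + Real.sin (u*y) / y * (φ' u - ψ' u)) u := h2
      convert h3 using 1
      simp only [hG_def, hS_def]
      field_simp
    have hFt : Tendsto F atTop (𝓝 0) := by
      apply squeeze_zero_norm (a := fun u => y⁻¹ * |φ u - ψ u|)
      · intro u
        rw [Real.norm_eq_abs, hF_def]
        simp only []
        rw [abs_mul, abs_div, abs_of_pos hy]
        apply mul_le_mul_of_nonneg_right _ (abs_nonneg _)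
        rw [div_eq_mul_inv, mul_comm]
        exact mul_le_of_le_one_right (inv_pos.2 hy).le (abs_sin_le_one _)
      · have h0 : Tendsto (fun u => |φ u - ψ u|) atTop (𝓝 0) := by
          simpa using (hφ0.sub hψ0).abs
        simpa using h0.const_mul y⁻¹
    -- FTC on (ε, ∞)
    have hFTC : ∀ ε : ℝ, 0 < ε →
        ∫ u in Ioi ε, G u = -F ε - y⁻¹ * ∫ u in Ioi ε, S u := by
      intro ε hε
      have hd : ∀ x ∈ Ioi ε, HasDerivAt F (G x + y⁻¹ * S x) x :=
        fun x hx => hFd x (lt_trans hε hx)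
      have hGε : IntegrableOn G (Ioi ε) := hGint.integrableOn
      have hSε : IntegrableOn S (Ioi ε) := hSint.mono_set (Ioi_subset_Ioi hε.le)
      have hi : IntegrableOn (fun x => G x + y⁻¹ * S x) (Ioi ε) := hGε.add (hSε.const_mul _)
      have := integral_Ioi_of_hasDerivAt_of_tendsto
        ((hFd ε hε).continuousAt.continuousWithinAt) hd hi hFt
      rw [integral_add hGε (hSε.const_mul _), integral_const_mul, zero_sub] at this
      linarith
    -- choose a good sequence tending to 0
    have hseq : ∀ n : ℕ, ∃ ε : ℝ, 0 < ε ∧ ε < 1/((n:ℝ)+1) ∧ ε * |φ ε - ψ ε| < 1/((n:ℝ)+1) := by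
      intro n
      have hpos : (0:ℝ) < 1/((n:ℝ)+1) := by positivity
      refine exists_small_mul_abs _ hhint.integrableOn hpos ?_ hpos
      rw [div_le_one (by positivity)]
      exact le_add_of_nonneg_left (Nat.cast_nonneg n)
    choose εs hεs0 hεs1 hεs2 using hseq
    have hεlim : Tendsto εs atTop (𝓝 0) :=
      squeeze_zero (fun n => (hεs0 n).le) (fun n => (hεs1 n).le)
        tendsto_one_div_add_atTop_nhds_zero_nat
    -- dominated convergence
    have hDCT : ∀ W : ℝ → ℝ, IntegrableOn W (Ioi (0:ℝ)) →
        Tendsto (fun n => ∫ u in Ioi (εs n), W u) atTop (𝓝 (∫ u in Ioi (0:ℝ), W u)) := by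
      intro W hWi
      have heq : ∀ n, ∫ u in Ioi (εs n), W u
          = ∫ u in Ioi (0:ℝ), (Ioi (εs n)).indicator W u := by
        intro n
        rw [setIntegral_indicator measurableSet_Ioi, Set.Ioi_inter_Ioi,
          max_eq_right (hεs0 n).le]
      simp_rw [heq]
      apply tendsto_integral_of_dominated_convergence (fun u => ‖W u‖)
      · exact fun n => hWi.aestronglyMeasurable.indicator measurableSet_Ioi
      · exact hWi.norm
      · exact fun n => Eventually.of_forall fun u => norm_indicator_le_norm_self _ _
      · filter_upwards [ae_restrict_mem measurableSet_Ioi] with u hu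
        have hev : ∀ᶠ n in atTop, εs n < u := hεlim.eventually (gt_mem_nhds hu)
        exact Tendsto.congr'
          (hev.mono fun n hn => (Set.indicator_of_mem (mem_Ioi.2 hn) W).symm)
          tendsto_const_nhds
    have limF : Tendsto (fun n => F (εs n)) atTop (𝓝 0) := by
      apply squeeze_zero_norm (a := fun n : ℕ => 1/((n:ℝ)+1)) _
        tendsto_one_div_add_atTop_nhds_zero_nat
      intro n
      have h1 : ‖F (εs n)‖ = |Real.sin (εs n * y)| / y * |φ (εs n) - ψ (εs n)| := by
        rw [Real.norm_eq_abs, hF_def]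
        simp only []
        rw [abs_mul, abs_div, abs_of_pos hy]
      have h2 : |Real.sin (εs n * y)| / y ≤ εs n := by
        rw [div_le_iff₀ hy]
        calc |Real.sin (εs n * y)| ≤ |εs n * y| := Real.abs_sin_le_abs
          _ = εs n * y := abs_of_pos (mul_pos (hεs0 n) hy)
      calc ‖F (εs n)‖ ≤ εs n * |φ (εs n) - ψ (εs n)| := by
            rw [h1]; exact mul_le_mul_of_nonneg_right h2 (abs_nonneg _)
        _ ≤ 1/((n:ℝ)+1) := (hεs2 n).le
    -- the integration by parts identity on (0, ∞)
    have hIBP : ∫ u in Ioi (0:ℝ), G u = -(y⁻¹ * ∫ u in Ioi (0:ℝ), S u) := by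
      have t1 := hDCT G hGint.integrableOn
      have t2 : Tendsto (fun n => ∫ u in Ioi (εs n), G u) atTop
          (𝓝 (-(y⁻¹ * ∫ u in Ioi (0:ℝ), S u))) := by
        have h3 := limF.neg.sub ((hDCT S hSint).const_mul y⁻¹)
        simp only [neg_zero, zero_sub] at h3
        exact Tendsto.congr (fun n => (hFTC (εs n) (hεs0 n)).symm) h3
      exact tendsto_nhds_unique t1 t2
    -- conclude pointwise bound
    have hnormS : |∫ u in Ioi (0:ℝ), S u| ≤ y ^ r * M := by
      calc |∫ u in Ioi (0:ℝ), S u| ≤ ∫ u in Ioi (0:ℝ), ‖S u‖ :=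
          norm_integral_le_integral_norm S
        _ ≤ ∫ u in Ioi (0:ℝ), y ^ r * (u ^ r * |φ' u - ψ' u|) :=
          setIntegral_mono_on hSint.norm (hW.const_mul _) measurableSet_Ioi hSle
        _ = y ^ r * M := by rw [integral_const_mul]
    rw [hrep, abs_mul, abs_of_pos (inv_pos.2 hπ), hIBP, abs_neg, abs_mul,
      abs_of_pos (inv_pos.2 hy)]
    have : y⁻¹ * (y ^ r * M) = y ^ (r-1) * M := by
      rw [Real.rpow_sub hy, Real.rpow_one]
      field_simp
    calc π⁻¹ * (y⁻¹ * |∫ u in Ioi (0:ℝ), S u|) ≤ π⁻¹ * (y⁻¹ * (y ^ r * M)) := by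
          apply mul_le_mul_of_nonneg_left _ (inv_pos.2 hπ).le
          exact mul_le_mul_of_nonneg_left hnormS (inv_pos.2 hy).le
      _ = π⁻¹ * y ^ (r-1) * M := by rw [this]; ring
  -- final integration over (0, b]
  have h1 : IntervalIntegrable (fun x : ℝ => x ^ (r-1)) volume 0 b :=
    intervalIntegral.intervalIntegrable_rpow' (by linarith)
  have h2 : IntegrableOn (fun x : ℝ => x ^ (r-1)) (Ioc 0 b) := h1.1
  have hbi : IntegrableOn (fun y : ℝ => π⁻¹ * y ^ (r-1) * M) (Ioc 0 b) :=
    (h2.const_mul π⁻¹).mul_const M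
  calc ∫ y in Set.Ioc (0:ℝ) b, |f y - g y|
      ≤ ∫ y in Set.Ioc (0:ℝ) b, π⁻¹ * y ^ (r-1) * M := by
        apply integral_mono_of_nonneg (Eventually.of_forall fun y => abs_nonneg _) hbi
        rw [EventuallyLE, ae_restrict_iff' measurableSet_Ioc]
        exact Eventually.of_forall fun y hy => key y hy.1
    _ = (b ^ r / (π * r)) * M := by
        have e1 : ∫ y in Set.Ioc (0:ℝ) b, π⁻¹ * y ^ (r-1) * M
            = π⁻¹ * (∫ y in Set.Ioc (0:ℝ) b, y ^ (r-1)) * M := by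
          rw [integral_mul_const, integral_const_mul]
        have e2 : ∫ y in Set.Ioc (0:ℝ) b, y ^ (r-1) = b ^ r / r := by
          rw [← intervalIntegral.integral_of_le hb.le,
            integral_rpow (Or.inl (by linarith : (-1:ℝ) < r - 1))]
          rw [sub_add_cancel, Real.zero_rpow hr0.ne']
          ring
        rw [e1, e2]
        field_simp
end

section
/- (Consistency under possible multi-scaling.) Under the stated setting, any random elements (û_{1,n}, û_{2,n}) ∈ K₁ × K₂ satisfying H_n(û_{1,n}, û_{2,n}) ≥ sup_{(u₁,u₂)∈K₁×K₂} H_n(u₁,u₂) − R_n, where R_n ≥ 0 are random variables with R_n/k_{2,n} → 0 in probability, converge in probability to (u_{1,0}, u_{2,0}). -/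
open MeasureTheory Real Set Filter
open scoped ENNReal

private lemma le_iSup_single {E : Type*} {K : Set E} {D : E → ℝ} {C : ℝ}
    (hC : ∀ u ∈ K, D u ≤ C) : ∀ u ∈ K, D u ≤ ⨆ u : K, D ↑u := by
  intro u hu
  have hbdd : BddAbove (Set.range fun v : K => D ↑v) := by
    refine ⟨C, ?_⟩; rintro _ ⟨⟨v, hv⟩, rfl⟩; exact hC v hv
  exact le_ciSup hbdd ⟨u, hu⟩

private lemma le_iSup_double {E₁ E₂ : Type*} {K₁ : Set E₁} {K₂ : Set E₂} (h₂ : K₂.Nonempty)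
    {D : E₁ → E₂ → ℝ} {C : ℝ} (hC : ∀ u₁ ∈ K₁, ∀ u₂ ∈ K₂, D u₁ u₂ ≤ C) :
    ∀ u₁ ∈ K₁, ∀ u₂ ∈ K₂, D u₁ u₂ ≤ ⨆ u₁ : K₁, ⨆ u₂ : K₂, D ↑u₁ ↑u₂ := by
  intro u₁ h₁ u₂ hu₂
  haveI : Nonempty K₂ := h₂.to_subtype
  have inner_le : ∀ v₁ : K₁, (⨆ u₂ : K₂, D ↑v₁ ↑u₂) ≤ C := fun v₁ =>
    ciSup_le fun v₂ => hC _ v₁.2 _ v₂.2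
  have hbdd1 : BddAbove (Set.range fun v₂ : K₂ => D u₁ ↑v₂) := by
    refine ⟨C, ?_⟩; rintro _ ⟨v₂, rfl⟩; exact hC _ h₁ _ v₂.2
  have step1 : D u₁ u₂ ≤ ⨆ u₂ : K₂, D u₁ ↑u₂ := le_ciSup hbdd1 ⟨u₂, hu₂⟩
  have hbdd2 : BddAbove (Set.range fun v₁ : K₁ => ⨆ u₂ : K₂, D ↑v₁ ↑u₂) := by
    refine ⟨C, ?_⟩; rintro _ ⟨v₁, rfl⟩; exact inner_le v₁
  exact step1.trans (le_ciSup hbdd2 ⟨u₁, h₁⟩)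

private lemma det_lemma {E₁ E₂ : Type*} [MetricSpace E₁] [MetricSpace E₂]
    {K₁ : Set E₁} {K₂ : Set E₂} (hK₁ : IsCompact K₁) (hK₂ : IsCompact K₂)
    {u₁0 : E₁} {u₂0 : E₂} (h10 : u₁0 ∈ K₁) (h20 : u₂0 ∈ K₂)
    {f : E₁ → ℝ} {g : E₁ → E₂ → ℝ}
    (hf : ContinuousOn f K₁)
    (hg : ContinuousOn (fun q : E₁ × E₂ => g q.1 q.2) (K₁ ×ˢ K₂))
    (hfmax : ∀ u₁ ∈ K₁, u₁ ≠ u₁0 → f u₁ < f u₁0)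
    (hgmax : ∀ u₂ ∈ K₂, u₂ ≠ u₂0 → g u₁0 u₂ < g u₁0 u₂0)
    {F : ℕ → E₁ → ℝ} {G : ℕ → E₁ → E₂ → ℝ} {a b r t : ℕ → ℝ}
    (hFa : ∀ᶠ n in atTop, ∀ u₁ ∈ K₁, |F n u₁ - f u₁| ≤ a n)
    (hGb : ∀ᶠ n in atTop, ∀ u₁ ∈ K₁, ∀ u₂ ∈ K₂, |G n u₁ u₂ - g u₁ u₂| ≤ b n)
    (ha : Tendsto a atTop (nhds 0)) (hb : Tendsto b atTop (nhds 0))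
    (hr : Tendsto r atTop (nhds 0)) (ht : Tendsto t atTop (nhds 0))
    (hr0 : ∀ n, 0 ≤ r n) (ht0 : ∀ n, 0 ≤ t n)
    {x : ℕ → E₁} {y : ℕ → E₂} (hx : ∀ n, x n ∈ K₁) (hy : ∀ n, y n ∈ K₂)
    (hnm1 : ∀ n, F n u₁0 + t n * G n u₁0 u₂0 - t n * r n ≤ F n (x n) + t n * G n (x n) (y n))
    (hnm2 : ∀ n, ∀ u₂ ∈ K₂, G n (x n) u₂ - r n ≤ G n (x n) (y n)) :
    ∀ ε : ℝ, 0 < ε → ∀ᶠ n in atTop, dist (x n) u₁0 + dist (y n) u₂0 < ε := by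
  obtain ⟨M, hM⟩ := (hK₁.prod hK₂).exists_bound_of_continuousOn hg
  have hM' : ∀ u₁ ∈ K₁, ∀ u₂ ∈ K₂, |g u₁ u₂| ≤ M := fun u₁ h₁ u₂ h₂ => by
    simpa [Real.norm_eq_abs] using hM (u₁, u₂) ⟨h₁, h₂⟩
  -- Step 1: key lower bound on f (x n)
  have key1 : ∀ᶠ n in atTop,
      f u₁0 - (2 * a n + 2 * (t n * (M + b n)) + t n * r n) ≤ f (x n) := by
    filter_upwards [hFa, hGb] with n hFa' hGb'
    have h1 := hnm1 n
    have hG1 := abs_le.mp (hGb' _ h10 _ h20)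
    have hG2 := abs_le.mp (hGb' _ (hx n) _ (hy n))
    have hg1 := abs_le.mp (hM' _ h10 _ h20)
    have hg2 := abs_le.mp (hM' _ (hx n) _ (hy n))
    have hF1 := abs_le.mp (hFa' _ h10)
    have hF2 := abs_le.mp (hFa' _ (hx n))
    have hb1 : -(M + b n) ≤ G n u₁0 u₂0 := by linarith [hG1.1, hg1.1]
    have hb2 : G n (x n) (y n) ≤ M + b n := by linarith [hG2.2, hg2.2]
    have m1 : -(t n * (M + b n)) ≤ t n * G n u₁0 u₂0 := by
      have := mul_le_mul_of_nonneg_left hb1 (ht0 n); linarith [this, (mul_neg (t n) (M + b n))]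
    have m2 : t n * G n (x n) (y n) ≤ t n * (M + b n) :=
      mul_le_mul_of_nonneg_left hb2 (ht0 n)
    linarith [hF1.1, hF2.2]
  have hc : Tendsto (fun n => 2 * a n + 2 * (t n * (M + b n)) + t n * r n) atTop (nhds 0) := by
    have h1 : Tendsto (fun n => 2 * a n) atTop (nhds (2 * 0)) := ha.const_mul 2
    have h2 : Tendsto (fun n => 2 * (t n * (M + b n))) atTop (nhds (2 * (0 * (M + 0)))) :=
      (ht.mul (tendsto_const_nhds.add hb)).const_mul 2
    have h3 : Tendsto (fun n => t n * r n) atTop (nhds (0 * 0)) := ht.mul hr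
    simpa using (h1.add h2).add h3
  -- Claim A
  have hA : ∀ ε' : ℝ, 0 < ε' → ∀ᶠ n in atTop, dist (x n) u₁0 < ε' := by
    intro ε' hε'
    by_cases hA' : (K₁ ∩ {u | ε' ≤ dist u u₁0}).Nonempty
    · have hcl : IsClosed {u : E₁ | ε' ≤ dist u u₁0} :=
        isClosed_le continuous_const (continuous_id.dist continuous_const)
      have hAc : IsCompact (K₁ ∩ {u | ε' ≤ dist u u₁0}) := hK₁.inter_right hcl
      obtain ⟨z, hzA, hzmax⟩ := hAc.exists_isMaxOn hA' (hf.mono inter_subset_left)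
      have hz0 : z ≠ u₁0 := by
        intro h; subst h
        have := hzA.2; simp only [mem_setOf_eq, dist_self] at this; linarith
      have hγ : 0 < f u₁0 - f z := sub_pos.mpr (hfmax z hzA.1 hz0)
      filter_upwards [key1, hc.eventually_lt_const hγ] with n h1 h2
      by_contra hcon
      push_neg at hcon
      have hxA : x n ∈ K₁ ∩ {u | ε' ≤ dist u u₁0} := ⟨hx n, hcon⟩
      have := hzmax hxA
      simp only [mem_setOf_eq] at this
      linarith
    · refine Eventually.of_forall fun n => ?_
      by_contra h
      push_neg at h
      exact hA' ⟨x n, hx n, h⟩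
  -- Step 2: key bound for g
  have key2 : ∀ᶠ n in atTop, ∀ u₂ ∈ K₂, g (x n) u₂ - (2 * b n + r n) ≤ g (x n) (y n) := by
    filter_upwards [hGb] with n hGb' u₂ hu₂
    have h2 := hnm2 n u₂ hu₂
    have e1 := abs_le.mp (hGb' _ (hx n) _ hu₂)
    have e2 := abs_le.mp (hGb' _ (hx n) _ (hy n))
    linarith [e1.1, e2.2]
  -- Claim B
  have hB : ∀ ε' : ℝ, 0 < ε' → ∀ᶠ n in atTop, dist (y n) u₂0 < ε' := by
    intro ε' hε'
    by_cases hB' : (K₂ ∩ {u | ε' ≤ dist u u₂0}).Nonempty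
    · have hcl : IsClosed {u : E₂ | ε' ≤ dist u u₂0} :=
        isClosed_le continuous_const (continuous_id.dist continuous_const)
      have hAc : IsCompact (K₂ ∩ {u | ε' ≤ dist u u₂0}) := hK₂.inter_right hcl
      have hgu : ContinuousOn (fun u₂ => g u₁0 u₂) K₂ := by
        have hmk : ContinuousOn (fun u₂ : E₂ => ((u₁0, u₂) : E₁ × E₂)) K₂ :=
          (Continuous.prodMk_right u₁0).continuousOn
        exact hg.comp hmk fun u₂ hu₂ => ⟨h10, hu₂⟩
      obtain ⟨z₂, hz₂A, hz₂max⟩ := hAc.exists_isMaxOn hB' (hgu.mono inter_subset_left)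
      have hz₂0 : z₂ ≠ u₂0 := by
        intro h; subst h
        have := hz₂A.2; simp only [mem_setOf_eq, dist_self] at this; linarith
      have hγ : 0 < g u₁0 u₂0 - g u₁0 z₂ := sub_pos.mpr (hgmax z₂ hz₂A.1 hz₂0)
      set γ₂ := g u₁0 u₂0 - g u₁0 z₂ with hγ₂def
      have huc := (hK₁.prod hK₂).uniformContinuousOn_of_continuous hg
      rw [Metric.uniformContinuousOn_iff] at huc
      obtain ⟨δ, hδ, hδ'⟩ := huc (γ₂ / 4) (by positivity)
      have hdn : Tendsto (fun n => 2 * b n + r n) atTop (nhds 0) := by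
        have := (hb.const_mul 2).add hr; simpa using this
      filter_upwards [key2, hA δ hδ, hdn.eventually_lt_const (by positivity : (0:ℝ) < γ₂ / 4)]
        with n h2 hxδ hdn'
      by_contra hcon
      push_neg at hcon
      have hyA : y n ∈ K₂ ∩ {u | ε' ≤ dist u u₂0} := ⟨hy n, hcon⟩
      have hgy : g u₁0 (y n) ≤ g u₁0 z₂ := hz₂max hyA
      have d1 : dist ((x n, y n) : E₁ × E₂) (u₁0, y n) < δ := by
        rw [Prod.dist_eq]
        simpa [dist_self, max_eq_left dist_nonneg] using hxδ
      have d2 : dist ((x n, u₂0) : E₁ × E₂) (u₁0, u₂0) < δ := by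
        rw [Prod.dist_eq]
        simpa [dist_self, max_eq_left dist_nonneg] using hxδ
      have q1 : |g (x n) (y n) - g u₁0 (y n)| < γ₂ / 4 := by
        have := hδ' (x n, y n) ⟨hx n, hy n⟩ (u₁0, y n) ⟨h10, hy n⟩ d1
        simpa [Real.dist_eq] using this
      have q2 : |g (x n) u₂0 - g u₁0 u₂0| < γ₂ / 4 := by
        have := hδ' (x n, u₂0) ⟨hx n, h20⟩ (u₁0, u₂0) ⟨h10, h20⟩ d2
        simpa [Real.dist_eq] using this
      have h2' := h2 u₂0 h20
      have l1 := abs_lt.mp q1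
      have l2 := abs_lt.mp q2
      linarith [l1.1, l1.2, l2.1, l2.2]
    · refine Eventually.of_forall fun n => ?_
      by_contra h
      push_neg at h
      exact hB' ⟨y n, hy n, h⟩
  intro ε hε
  filter_upwards [hA (ε / 2) (by positivity), hB (ε / 2) (by positivity)] with n h1 h2
  linarith

/-- consistency under possible multi-scaling: near-maximizers of the
two-scale contrast `H_n(u₁,u₂) = k_{1,n} H_{1,n}(u₁) + k_{2,n} H_{2,n}(u₁,u₂)` converge in
probability to `(u_{1,0},u_{2,0})`. -/
theorem multiscale_consistency
    {Ω : Type*} [MeasurableSpace Ω] (P : Measure Ω) [IsProbabilityMeasure P]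
    (p₁ p₂ : ℕ)
    (K₁ : Set (EuclideanSpace ℝ (Fin p₁))) (K₂ : Set (EuclideanSpace ℝ (Fin p₂)))
    (hK₁ : IsCompact K₁) (hK₂ : IsCompact K₂)
    (u₁0 : EuclideanSpace ℝ (Fin p₁)) (u₂0 : EuclideanSpace ℝ (Fin p₂))
    (hu0 : (u₁0, u₂0) ∈ interior (K₁ ×ˢ K₂))
    (k1 k2 : ℕ → ℝ) (hk1 : ∀ n, 0 < k1 n) (hk2 : ∀ n, 0 < k2 n)
    (hk : Filter.Tendsto (fun n => k2 n / k1 n) Filter.atTop (nhds 0))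
    (H1n : ℕ → Ω → EuclideanSpace ℝ (Fin p₁) → ℝ)
    (H2n : ℕ → Ω → EuclideanSpace ℝ (Fin p₁) → EuclideanSpace ℝ (Fin p₂) → ℝ)
    (H10 : Ω → EuclideanSpace ℝ (Fin p₁) → ℝ)
    (H20 : Ω → EuclideanSpace ℝ (Fin p₁) → EuclideanSpace ℝ (Fin p₂) → ℝ)
    (hc1 : ∀ n ω, ContinuousOn (H1n n ω) K₁)
    (hc2 : ∀ n ω, ContinuousOn
      (fun q : EuclideanSpace ℝ (Fin p₁) × EuclideanSpace ℝ (Fin p₂) => H2n n ω q.1 q.2)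
      (K₁ ×ˢ K₂))
    (hc10 : ∀ ω, ContinuousOn (H10 ω) K₁)
    (hc20 : ∀ ω, ContinuousOn
      (fun q : EuclideanSpace ℝ (Fin p₁) × EuclideanSpace ℝ (Fin p₂) => H20 ω q.1 q.2)
      (K₁ ×ˢ K₂))
    (hconv1 : ∀ ε : ℝ, 0 < ε → Filter.Tendsto
      (fun n => P {ω | ε ≤ ⨆ u₁ : K₁, |H1n n ω ↑u₁ - H10 ω ↑u₁|})
      Filter.atTop (nhds 0))
    (hconv2 : ∀ ε : ℝ, 0 < ε → Filter.Tendsto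
      (fun n => P {ω | ε ≤ ⨆ u₁ : K₁, ⨆ u₂ : K₂, |H2n n ω ↑u₁ ↑u₂ - H20 ω ↑u₁ ↑u₂|})
      Filter.atTop (nhds 0))
    (hmax : ∀ᵐ ω ∂P,
      (∀ u₁ ∈ K₁, u₁ ≠ u₁0 → H10 ω u₁ < H10 ω u₁0) ∧
      (∀ u₂ ∈ K₂, u₂ ≠ u₂0 → H20 ω u₁0 u₂ < H20 ω u₁0 u₂0))
    (uhat₁ : ℕ → Ω → EuclideanSpace ℝ (Fin p₁)) (uhat₂ : ℕ → Ω → EuclideanSpace ℝ (Fin p₂))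
    (hmeas₁ : ∀ n, Measurable (uhat₁ n)) (hmeas₂ : ∀ n, Measurable (uhat₂ n))
    (hmem : ∀ n ω, uhat₁ n ω ∈ K₁ ∧ uhat₂ n ω ∈ K₂)
    (R : ℕ → Ω → ℝ) (hR : ∀ n ω, 0 ≤ R n ω)
    (hRconv : ∀ ε : ℝ, 0 < ε → Filter.Tendsto
      (fun n => P {ω | ε ≤ R n ω / k2 n}) Filter.atTop (nhds 0))
    (hnearmax : ∀ n ω, ∀ u₁ ∈ K₁, ∀ u₂ ∈ K₂,
      k1 n * H1n n ω u₁ + k2 n * H2n n ω u₁ u₂ - R n ω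
        ≤ k1 n * H1n n ω (uhat₁ n ω) + k2 n * H2n n ω (uhat₁ n ω) (uhat₂ n ω)) :
    ∀ ε : ℝ, 0 < ε → Filter.Tendsto
      (fun n => P {ω | ε ≤ dist (uhat₁ n ω) u₁0 + dist (uhat₂ n ω) u₂0})
      Filter.atTop (nhds 0) := by
  intro ε hε
  have hu0' : u₁0 ∈ K₁ ∧ u₂0 ∈ K₂ := by
    have h := interior_subset hu0
    exact ⟨h.1, h.2⟩
  obtain ⟨h10, h20⟩ := hu0'
  have hK₂ne : K₂.Nonempty := ⟨u₂0, h20⟩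
  set s : ℕ → Set Ω := fun n => {ω | ε ≤ dist (uhat₁ n ω) u₁0 + dist (uhat₂ n ω) u₂0}
    with hs_def
  have hsm : ∀ n, MeasurableSet (s n) := by
    intro n
    have m1 : Measurable fun ω => dist (uhat₁ n ω) u₁0 :=
      (continuous_id.dist continuous_const).measurable.comp (hmeas₁ n)
    have m2 : Measurable fun ω => dist (uhat₂ n ω) u₂0 :=
      (continuous_id.dist continuous_const).measurable.comp (hmeas₂ n)
    exact measurableSet_le measurable_const (m1.add m2)
  apply tendsto_of_subseq_tendsto
  intro ns hns
  have hpow : ∀ j : ℕ, (0 : ℝ≥0∞) < (2⁻¹ : ℝ≥0∞) ^ j := fun j =>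
    ENNReal.pow_pos (ENNReal.inv_pos.mpr ENNReal.ofNat_ne_top) j
  have hP : ∀ j : ℕ, ∀ᶠ m in atTop,
      P {ω | 1 / ((j:ℝ) + 1) ≤ ⨆ u₁ : K₁, |H1n (ns m) ω ↑u₁ - H10 ω ↑u₁|} ≤ (2⁻¹ : ℝ≥0∞) ^ j ∧
      P {ω | 1 / ((j:ℝ) + 1) ≤
          ⨆ u₁ : K₁, ⨆ u₂ : K₂, |H2n (ns m) ω ↑u₁ ↑u₂ - H20 ω ↑u₁ ↑u₂|} ≤ (2⁻¹ : ℝ≥0∞) ^ j ∧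
      P {ω | 1 / ((j:ℝ) + 1) ≤ R (ns m) ω / k2 (ns m)} ≤ (2⁻¹ : ℝ≥0∞) ^ j := by
    intro j
    have hjpos : (0:ℝ) < 1 / ((j:ℝ) + 1) := by positivity
    have e1 := ((hconv1 _ hjpos).comp hns).eventually_lt_const (hpow j)
    have e2 := ((hconv2 _ hjpos).comp hns).eventually_lt_const (hpow j)
    have e3 := ((hRconv _ hjpos).comp hns).eventually_lt_const (hpow j)
    filter_upwards [e1, e2, e3] with m f1 f2 f3
    exact ⟨f1.le, f2.le, f3.le⟩
  obtain ⟨ms, hms_mono, hms⟩ := extraction_forall_of_eventually hP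
  set nj : ℕ → ℕ := fun j => ns (ms j) with hnj_def
  have hnj : Tendsto nj atTop atTop := hns.comp hms_mono.tendsto_atTop
  set bad : ℕ → Set Ω := fun j =>
    {ω | 1 / ((j:ℝ) + 1) ≤ ⨆ u₁ : K₁, |H1n (nj j) ω ↑u₁ - H10 ω ↑u₁|} ∪
    ({ω | 1 / ((j:ℝ) + 1) ≤
        ⨆ u₁ : K₁, ⨆ u₂ : K₂, |H2n (nj j) ω ↑u₁ ↑u₂ - H20 ω ↑u₁ ↑u₂|} ∪
     {ω | 1 / ((j:ℝ) + 1) ≤ R (nj j) ω / k2 (nj j)}) with hbad_def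
  have hsum : (∑' j, P (bad j)) ≠ ∞ := by
    have hb : ∀ j, P (bad j) ≤ 3 * (2⁻¹ : ℝ≥0∞) ^ j := by
      intro j
      obtain ⟨q1, q2, q3⟩ := hms j
      calc P (bad j) ≤ _ + _ := measure_union_le _ _
        _ ≤ _ + (_ + _) := add_le_add le_rfl (measure_union_le _ _)
        _ ≤ (2⁻¹:ℝ≥0∞)^j + ((2⁻¹:ℝ≥0∞)^j + (2⁻¹:ℝ≥0∞)^j) := add_le_add q1 (add_le_add q2 q3)
        _ = 3 * (2⁻¹:ℝ≥0∞)^j := by ring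
    have hle : (∑' j, P (bad j)) ≤ ∑' j, 3 * (2⁻¹ : ℝ≥0∞) ^ j := ENNReal.tsum_le_tsum hb
    refine ne_top_of_le_ne_top ?_ hle
    rw [ENNReal.tsum_mul_left, ENNReal.tsum_geometric, ENNReal.one_sub_inv_two, inv_inv]
    exact ENNReal.mul_ne_top (by norm_num) ENNReal.ofNat_ne_top
  have hae := ae_eventually_notMem hsum
  have hfin : ∀ᵐ ω ∂P, ∀ᶠ j in atTop, ω ∉ s (nj j) := by
    filter_upwards [hae, hmax] with ω hω hmaxω
    have hFa : ∀ᶠ j in atTop, ∀ u₁ ∈ K₁,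
        |H1n (nj j) ω u₁ - H10 ω u₁| ≤ 1 / ((j:ℝ)+1) := by
      filter_upwards [hω] with j hj u₁ hu₁
      have hnot : ¬ (1 / ((j:ℝ)+1) ≤ ⨆ u₁ : K₁, |H1n (nj j) ω ↑u₁ - H10 ω ↑u₁|) := by
        intro hcon; exact hj (Set.mem_union_left _ hcon)
      push_neg at hnot
      obtain ⟨C, hC⟩ := hK₁.exists_bound_of_continuousOn ((hc1 (nj j) ω).sub (hc10 ω))
      have hCb : ∀ u ∈ K₁, |H1n (nj j) ω u - H10 ω u| ≤ C := fun u hu => by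
        simpa [Real.norm_eq_abs] using hC u hu
      exact (le_iSup_single hCb u₁ hu₁).trans hnot.le
    have hGb : ∀ᶠ j in atTop, ∀ u₁ ∈ K₁, ∀ u₂ ∈ K₂,
        |H2n (nj j) ω u₁ u₂ - H20 ω u₁ u₂| ≤ 1 / ((j:ℝ)+1) := by
      filter_upwards [hω] with j hj u₁ hu₁ u₂ hu₂
      have hnot : ¬ (1 / ((j:ℝ)+1) ≤
          ⨆ u₁ : K₁, ⨆ u₂ : K₂, |H2n (nj j) ω ↑u₁ ↑u₂ - H20 ω ↑u₁ ↑u₂|) := by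
        intro hcon; exact hj (Set.mem_union_right _ (Set.mem_union_left _ hcon))
      push_neg at hnot
      obtain ⟨C, hC⟩ := (hK₁.prod hK₂).exists_bound_of_continuousOn
        ((hc2 (nj j) ω).sub (hc20 ω))
      have hCb : ∀ u₁ ∈ K₁, ∀ u₂ ∈ K₂, |H2n (nj j) ω u₁ u₂ - H20 ω u₁ u₂| ≤ C :=
        fun v₁ h₁ v₂ h₂ => by simpa [Real.norm_eq_abs] using hC (v₁, v₂) ⟨h₁, h₂⟩
      exact (le_iSup_double hK₂ne hCb u₁ hu₁ u₂ hu₂).trans hnot.le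
    have hrle : ∀ᶠ j in atTop, R (nj j) ω / k2 (nj j) ≤ 1 / ((j:ℝ)+1) := by
      filter_upwards [hω] with j hj
      by_contra hcon
      push_neg at hcon
      exact hj (Set.mem_union_right _ (Set.mem_union_right _ hcon.le))
    have hr0 : ∀ j, 0 ≤ R (nj j) ω / k2 (nj j) := fun j => div_nonneg (hR _ _) (hk2 _).le
    have hr : Tendsto (fun j => R (nj j) ω / k2 (nj j)) atTop (nhds 0) :=
      tendsto_of_tendsto_of_tendsto_of_le_of_le' tendsto_const_nhds
        tendsto_one_div_add_atTop_nhds_zero_nat (Eventually.of_forall hr0) hrle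
    have ht : Tendsto (fun j => k2 (nj j) / k1 (nj j)) atTop (nhds 0) := hk.comp hnj
    have ht0 : ∀ j, 0 ≤ k2 (nj j) / k1 (nj j) := fun j => div_nonneg (hk2 _).le (hk1 _).le
    have hnm2 : ∀ j, ∀ u₂ ∈ K₂,
        H2n (nj j) ω (uhat₁ (nj j) ω) u₂ - R (nj j) ω / k2 (nj j)
          ≤ H2n (nj j) ω (uhat₁ (nj j) ω) (uhat₂ (nj j) ω) := by
      intro j u₂ hu₂
      have h := hnearmax (nj j) ω (uhat₁ (nj j) ω) (hmem (nj j) ω).1 u₂ hu₂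
      have h2 : (H2n (nj j) ω (uhat₁ (nj j) ω) u₂
          - H2n (nj j) ω (uhat₁ (nj j) ω) (uhat₂ (nj j) ω)) ≤ R (nj j) ω / k2 (nj j) := by
        rw [le_div_iff₀ (hk2 (nj j))]
        nlinarith [h]
      linarith
    have hnm1 : ∀ j,
        H1n (nj j) ω u₁0 + (k2 (nj j) / k1 (nj j)) * H2n (nj j) ω u₁0 u₂0
          - (k2 (nj j) / k1 (nj j)) * (R (nj j) ω / k2 (nj j))
          ≤ H1n (nj j) ω (uhat₁ (nj j) ω)
            + (k2 (nj j) / k1 (nj j)) * H2n (nj j) ω (uhat₁ (nj j) ω) (uhat₂ (nj j) ω) := by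
      intro j
      have h := hnearmax (nj j) ω u₁0 h10 u₂0 h20
      have hk1' : k1 (nj j) ≠ 0 := (hk1 (nj j)).ne'
      have hk2' : k2 (nj j) ≠ 0 := (hk2 (nj j)).ne'
      refine le_of_mul_le_mul_left ?_ (hk1 (nj j))
      have e1 : k1 (nj j) * (H1n (nj j) ω u₁0
            + k2 (nj j) / k1 (nj j) * H2n (nj j) ω u₁0 u₂0
            - k2 (nj j) / k1 (nj j) * (R (nj j) ω / k2 (nj j)))
          = k1 (nj j) * H1n (nj j) ω u₁0 + k2 (nj j) * H2n (nj j) ω u₁0 u₂0 - R (nj j) ω := by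
        field_simp
      have e2 : k1 (nj j) * (H1n (nj j) ω (uhat₁ (nj j) ω)
            + k2 (nj j) / k1 (nj j) * H2n (nj j) ω (uhat₁ (nj j) ω) (uhat₂ (nj j) ω))
          = k1 (nj j) * H1n (nj j) ω (uhat₁ (nj j) ω)
            + k2 (nj j) * H2n (nj j) ω (uhat₁ (nj j) ω) (uhat₂ (nj j) ω) := by
        field_simp
      rw [e1, e2]
      linarith
    have hdl := det_lemma hK₁ hK₂ h10 h20 (hc10 ω) (hc20 ω) hmaxω.1 hmaxω.2
      (F := fun j u₁ => H1n (nj j) ω u₁) (G := fun j u₁ u₂ => H2n (nj j) ω u₁ u₂)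
      (a := fun j => 1 / ((j:ℝ)+1)) (b := fun j => 1 / ((j:ℝ)+1))
      (r := fun j => R (nj j) ω / k2 (nj j)) (t := fun j => k2 (nj j) / k1 (nj j))
      (x := fun j => uhat₁ (nj j) ω) (y := fun j => uhat₂ (nj j) ω)
      hFa hGb tendsto_one_div_add_atTop_nhds_zero_nat tendsto_one_div_add_atTop_nhds_zero_nat
      hr ht hr0 ht0 (fun j => (hmem (nj j) ω).1) (fun j => (hmem (nj j) ω).2) hnm1 hnm2 ε hε
    filter_upwards [hdl] with j hj
    simp only [hs_def, mem_setOf_eq]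
    exact not_le.mpr hj
  refine ⟨ms, ?_⟩
  set U : ℕ → Set Ω := fun m => ⋃ j, ⋃ (_ : m ≤ j), s (nj j) with hU_def
  have hUm : ∀ m, MeasurableSet (U m) := fun m =>
    MeasurableSet.iUnion fun j => MeasurableSet.iUnion fun _ => hsm (nj j)
  have hUanti : Antitone U := by
    intro m m' hmm'
    refine iUnion₂_subset fun j hj => ?_
    exact subset_iUnion₂ (s := fun j (_ : m ≤ j) => s (nj j)) j (hmm'.trans hj)
  have hU0 : P (⋂ m, U m) = 0 := by
    have hnm : ∀ᵐ ω ∂P, ω ∉ ⋂ m, U m := by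
      filter_upwards [hfin] with ω hω
      obtain ⟨m, hm⟩ := eventually_atTop.mp hω
      intro hcon
      rw [mem_iInter] at hcon
      have h := hcon m
      simp only [hU_def, mem_iUnion] at h
      obtain ⟨j, hj, hmem'⟩ := h
      exact hm j hj hmem'
    exact measure_eq_zero_iff_ae_notMem.mpr hnm
  have htendU : Tendsto (fun m => P (U m)) atTop (nhds 0) := by
    have h := tendsto_measure_iInter_atTop (μ := P)
      (fun m => (hUm m).nullMeasurableSet) hUanti ⟨0, measure_ne_top P _⟩
    rw [hU0] at h
    exact h
  have hle : ∀ m, P (s (nj m)) ≤ P (U m) := fun m =>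
    measure_mono (fun ω hω => mem_iUnion.mpr ⟨m, mem_iUnion.mpr ⟨le_rfl, hω⟩⟩)
  exact tendsto_of_tendsto_of_tendsto_of_le_of_le tendsto_const_nhds htendU
    (fun m => zero_le) hle
end

section
/- With h = h_n := T/n and t_j := j·h: sup over θ ∈ Θ̄ and t ∈ [0,T] of | n^{−1} · Σ_{j=1}^{⌊t/h⌋} f(X_{t_{j−1}}, θ) − T^{−1} · ∫_0^t f(X_s, θ) ds | converges to 0 in probability as n → ∞. -/
open MeasureTheory Real Set Filter Topology

lemma aux_meas_ciSup {α : Type*} [MeasurableSpace α] {ι : Type*} [Countable ι] [Nonempty ι]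
    {g : ι → α → ℝ} (hg : ∀ i, Measurable (g i))
    (hb : ∀ x, BddAbove (Set.range fun i => g i x)) :
    Measurable (fun x => ⨆ i, g i x) := by
  apply measurable_of_Iic
  intro a
  have h : (fun x => ⨆ i, g i x) ⁻¹' Set.Iic a = ⋂ i, {x | g i x ≤ a} := by
    ext x
    simp only [Set.mem_preimage, Set.mem_Iic, Set.mem_iInter, Set.mem_setOf_eq,
      ciSup_le_iff (hb x)]
  rw [h]
  exact MeasurableSet.iInter fun i => measurableSet_le (hg i) measurable_const

noncomputable def dStep (k : ℕ) (s : ℝ) : ℝ := (⌈s * 2 ^ k⌉ : ℤ) / 2 ^ k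

lemma dStep_le (k : ℕ) (s : ℝ) : s ≤ dStep k s := by
  rw [dStep, le_div_iff₀ (by positivity)]
  exact Int.le_ceil _

lemma dStep_lt (k : ℕ) (s : ℝ) : dStep k s < s + (2 ^ k)⁻¹ := by
  rw [dStep, div_lt_iff₀ (by positivity), add_mul, inv_mul_cancel₀ (by positivity)]
  exact Int.ceil_lt_add_one _

lemma dStep_tendsto (s : ℝ) : Tendsto (fun k => dStep k s) atTop (𝓝 s) := by
  have h1 : Tendsto (fun k : ℕ => s + (2 ^ k : ℝ)⁻¹) atTop (𝓝 (s + 0)) := by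
    refine tendsto_const_nhds.add ?_
    simp only [← inv_pow]
    exact tendsto_pow_atTop_nhds_zero_of_lt_one (by norm_num) (by norm_num)
  rw [add_zero] at h1
  exact tendsto_of_tendsto_of_tendsto_of_le_of_le tendsto_const_nhds h1
    (fun k => dStep_le k s) (fun k => (dStep_lt k s).le)

lemma dStep_tendsto_within (s : ℝ) :
    Tendsto (fun k => dStep k s) atTop (𝓝[≥] s) :=
  tendsto_nhdsWithin_iff.mpr ⟨dStep_tendsto s, Eventually.of_forall fun k => dStep_le k s⟩

lemma aux_meas_of_rightCont {g : ℝ → ℝ}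
    (hr : ∀ t : ℝ, ContinuousWithinAt g (Set.Ici t) t) : Measurable g := by
  have h1 : ∀ k : ℕ, Measurable (fun s : ℝ => g (dStep k s)) := by
    intro k
    have h2 : Measurable (fun z : ℤ => g ((z : ℝ) / 2 ^ k)) := measurable_from_top
    have h3 : Measurable (fun s : ℝ => ⌈s * 2 ^ k⌉) :=
      Int.measurable_ceil.comp (measurable_id.mul_const _)
    exact h2.comp h3
  refine measurable_of_tendsto_metrizable h1 (tendsto_pi_nhds.mpr fun s => ?_)
  exact (hr s).tendsto.comp (dStep_tendsto_within s)

lemma aux_joint_meas {Ω : Type*} [MeasurableSpace Ω] {X : ℝ → Ω → ℝ}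
    (hXmeas : ∀ t, Measurable (X t))
    (hright : ∀ ω t, ContinuousWithinAt (fun s => X s ω) (Set.Ici t) t) :
    Measurable (fun p : Ω × ℝ => X p.2 p.1) := by
  have h1 : ∀ k : ℕ, Measurable (fun p : Ω × ℝ => X (dStep k p.2) p.1) := by
    intro k
    have h2 : Measurable (fun q : Ω × ℤ => X ((q.2 : ℝ) / 2 ^ k) q.1) :=
      measurable_from_prod_countable_left fun z => by simpa using hXmeas ((z:ℝ)/2^k)
    have h3 : Measurable (fun p : Ω × ℝ => (p.1, ⌈p.2 * 2 ^ k⌉)) :=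
      measurable_fst.prodMk (Int.measurable_ceil.comp (measurable_snd.mul_const _))
    exact h2.comp h3
  refine measurable_of_tendsto_metrizable h1 (tendsto_pi_nhds.mpr fun p => ?_)
  exact (hright p.1 p.2).tendsto.comp (dStep_tendsto_within p.2)

lemma aux_bdd {g : ℝ → ℝ} {T : ℝ}
    (hr : ∀ t : ℝ, ContinuousWithinAt g (Set.Ici t) t)
    (hl : ∀ t : ℝ, 0 < t → t ≤ T → ∃ l, Tendsto g (𝓝[<] t) (𝓝 l)) :
    ∃ M : ℝ, ∀ s ∈ Set.Icc (0:ℝ) T, |g s| ≤ M := by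
  have key : ∀ t ∈ Set.Icc (0:ℝ) T, ∃ C, {s : ℝ | s < 0 ∨ |g s| ≤ C} ∈ 𝓝 t := by
    intro t ht
    have hrt : ∀ᶠ s in 𝓝[≥] t, |g s| ≤ |g t| + 1 := by
      have h := (hr t).tendsto.eventually (eventually_abs_sub_lt (g t) one_pos)
      filter_upwards [h] with s hs
      calc |g s| ≤ |g t| + |g s - g t| := by
            have := abs_sub_abs_le_abs_sub (g s) (g t); linarith [abs_nonneg (g s - g t)]
        _ ≤ |g t| + 1 := by linarith [hs.le]
    rcases eq_or_lt_of_le ht.1 with h0 | h0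
    · refine ⟨|g t| + 1, ?_⟩
      have hlt : ∀ᶠ s in 𝓝[<] t, s < 0 ∨ |g s| ≤ |g t| + 1 := by
        refine eventually_nhdsWithin_of_forall fun s hs => Or.inl ?_
        rw [← h0] at hs; exact hs
      have : ∀ᶠ s in 𝓝[≥] t, s < 0 ∨ |g s| ≤ |g t| + 1 := by
        filter_upwards [hrt] with s hs using Or.inr hs
      rw [← nhdsLT_sup_nhdsGE t]
      exact ⟨hlt, this⟩
    · obtain ⟨l, hlim⟩ := hl t h0 ht.2
      refine ⟨max (|g t| + 1) (|l| + 1), ?_⟩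
      have hlt : ∀ᶠ s in 𝓝[<] t, |g s| ≤ |l| + 1 := by
        have h := hlim.eventually (eventually_abs_sub_lt l one_pos)
        filter_upwards [h] with s hs
        calc |g s| ≤ |l| + |g s - l| := by
              have := abs_sub_abs_le_abs_sub (g s) l; linarith [abs_nonneg (g s - l)]
          _ ≤ |l| + 1 := by linarith [hs.le]
      have h1 : ∀ᶠ s in 𝓝[<] t, s < 0 ∨ |g s| ≤ max (|g t| + 1) (|l| + 1) := by
        filter_upwards [hlt] with s hs using Or.inr (hs.trans (le_max_right _ _))
      have h2 : ∀ᶠ s in 𝓝[≥] t, s < 0 ∨ |g s| ≤ max (|g t| + 1) (|l| + 1) := by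
        filter_upwards [hrt] with s hs using Or.inr (hs.trans (le_max_left _ _))
      rw [← nhdsLT_sup_nhdsGE t]
      exact ⟨h1, h2⟩
  classical
  choose! C hC using key
  obtain ⟨tset, htset, hcover⟩ := isCompact_Icc.elim_nhds_subcover
    (fun t => {s : ℝ | s < 0 ∨ |g s| ≤ C t}) (fun t ht => hC t ht)
  refine ⟨∑ x ∈ tset, |C x|, fun s hs => ?_⟩
  obtain ⟨x, hx, hsx⟩ := Set.mem_iUnion₂.mp (hcover hs)
  rcases hsx with h | h
  · linarith [hs.1]
  · calc |g s| ≤ |C x| := h.trans (le_abs_self _)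
      _ ≤ ∑ y ∈ tset, |C y| := Finset.single_le_sum (fun y _ => abs_nonneg (C y)) hx

variable {p : ℕ}

noncomputable def Fsup (f : ℝ → (Fin p → ℝ) → ℝ) (Θc : Set (Fin p → ℝ)) (x y : ℝ) : ℝ :=
  ⨆ θ : Θc, |f x (θ : Fin p → ℝ) - f y (θ : Fin p → ℝ)|

section FsupSec

variable {f : ℝ → (Fin p → ℝ) → ℝ} {Θc : Set (Fin p → ℝ)} {φ : ℝ → ℝ}

lemma Fsup_bddAbove (hb : ∀ x : ℝ, ∀ θ ∈ Θc, |f x θ| ≤ φ x) (x y : ℝ) :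
    BddAbove (Set.range fun θ : Θc => |f x (θ : Fin p → ℝ) - f y (θ : Fin p → ℝ)|) := by
  refine ⟨φ x + φ y, ?_⟩
  rintro r ⟨θ, rfl⟩
  exact (abs_sub _ _).trans (add_le_add (hb x θ θ.2) (hb y θ θ.2))

lemma le_Fsup (hb : ∀ x : ℝ, ∀ θ ∈ Θc, |f x θ| ≤ φ x) (x y : ℝ) {θ : Fin p → ℝ}
    (hθ : θ ∈ Θc) : |f x θ - f y θ| ≤ Fsup f Θc x y :=
  le_ciSup (Fsup_bddAbove hb x y) (⟨θ, hθ⟩ : Θc)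

lemma Fsup_nonneg (x y : ℝ) : 0 ≤ Fsup f Θc x y :=
  Real.iSup_nonneg fun _ => abs_nonneg _

lemma Fsup_le_bound (hb : ∀ x : ℝ, ∀ θ ∈ Θc, |f x θ| ≤ φ x) (hφ : ∀ x, 0 ≤ φ x) (x y : ℝ) :
    Fsup f Θc x y ≤ φ x + φ y :=
  Real.iSup_le (fun θ => (abs_sub _ _).trans (add_le_add (hb x θ θ.2) (hb y θ θ.2)))
    (by have := hφ x; have := hφ y; linarith)

lemma Fsup_tendsto_zero (hfc : Continuous fun q : ℝ × (Fin p → ℝ) => f q.1 q.2)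
    (hΘc : IsCompact Θc) {x : ℕ → ℝ} {x₀ : ℝ} (hx : Tendsto x atTop (𝓝 x₀)) :
    Tendsto (fun k => Fsup f Θc (x k) x₀) atTop (𝓝 0) := by
  rcases Θc.eq_empty_or_nonempty with rfl | hne
  · have : ∀ k, Fsup f (∅ : Set (Fin p → ℝ)) (x k) x₀ = 0 := by
      intro k
      have : IsEmpty ((∅ : Set (Fin p → ℝ)) : Set _) := by
        simp [Set.isEmpty_coe_sort]
      exact Real.iSup_of_isEmpty _
    simpa [this] using tendsto_const_nhds
  · rw [Metric.tendsto_atTop]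
    intro ε hε
    have hK : IsCompact (insert x₀ (Set.range x) ×ˢ Θc) :=
      (hx.isCompact_insert_range).prod hΘc
    have huc := hK.uniformContinuousOn_of_continuous hfc.continuousOn
    rw [Metric.uniformContinuousOn_iff] at huc
    obtain ⟨δ, hδ, hδ'⟩ := huc (ε / 2) (by linarith)
    obtain ⟨N, hN⟩ := (Metric.tendsto_atTop.mp hx) δ hδ
    refine ⟨N, fun k hk => ?_⟩
    have hF : Fsup f Θc (x k) x₀ ≤ ε / 2 := by
      refine Real.iSup_le (fun θ => ?_) (by linarith)
      have h1 : ((x k, (θ : Fin p → ℝ)) : ℝ × (Fin p → ℝ)) ∈ insert x₀ (Set.range x) ×ˢ Θc :=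
        ⟨Set.mem_insert_of_mem _ ⟨k, rfl⟩, θ.2⟩
      have h2 : ((x₀, (θ : Fin p → ℝ)) : ℝ × (Fin p → ℝ)) ∈ insert x₀ (Set.range x) ×ˢ Θc :=
        ⟨Set.mem_insert _ _, θ.2⟩
      have hd : dist ((x k, (θ : Fin p → ℝ)) : ℝ × (Fin p → ℝ)) (x₀, (θ : Fin p → ℝ)) < δ := by
        rw [Prod.dist_eq]
        simp only [dist_self]
        exact sup_lt_iff.mpr ⟨hN k hk, hδ⟩
      have := hδ' _ h1 _ h2 hd
      rw [Real.dist_eq] at this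
      exact this.le
    rw [Real.dist_eq, sub_zero, abs_of_nonneg (Fsup_nonneg _ _)]
    linarith


lemma Fsup_eq_ciSup_seq (hb : ∀ x : ℝ, ∀ θ ∈ Θc, |f x θ| ≤ φ x)
    (hfc : Continuous fun q : ℝ × (Fin p → ℝ) => f q.1 q.2)
    (u : ℕ → Θc) (hu : DenseRange u) (x y : ℝ) :
    Fsup f Θc x y = ⨆ k : ℕ, |f x (u k : Fin p → ℝ) - f y (u k : Fin p → ℝ)| := by
  have hbN : BddAbove (Set.range fun k : ℕ =>
      |f x (u k : Fin p → ℝ) - f y (u k : Fin p → ℝ)|) := by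
    refine ⟨φ x + φ y, ?_⟩
    rintro r ⟨k, rfl⟩
    exact (abs_sub _ _).trans (add_le_add (hb x _ (u k).2) (hb y _ (u k).2))
  apply le_antisymm
  · refine Real.iSup_le (fun θ => ?_) (Real.iSup_nonneg fun k => abs_nonneg _)
    set S := ⨆ k : ℕ, |f x (u k : Fin p → ℝ) - f y (u k : Fin p → ℝ)| with hS
    have hcont : Continuous fun v : Fin p → ℝ => |f x v - f y v| := by
      have c1 : Continuous fun v : Fin p → ℝ => f x v :=
        hfc.comp (continuous_const.prodMk continuous_id)
      have c2 : Continuous fun v : Fin p → ℝ => f y v :=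
        hfc.comp (continuous_const.prodMk continuous_id)
      exact (c1.sub c2).abs
    have hcl : IsClosed {v : Fin p → ℝ | |f x v - f y v| ≤ S} :=
      isClosed_le hcont continuous_const
    have hsub : Set.range (fun k => (u k : Fin p → ℝ)) ⊆ {v | |f x v - f y v| ≤ S} := by
      rintro _ ⟨k, rfl⟩
      exact le_ciSup hbN k
    have hθc : (θ : Fin p → ℝ) ∈ closure (Set.range fun k => (u k : Fin p → ℝ)) := by
      have h1 : (θ : Θc) ∈ closure (Set.range u) := hu θ
      rw [closure_subtype] at h1
      rwa [← Set.range_comp] at h1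
    exact closure_minimal hsub hcl hθc
  · exact Real.iSup_le (fun k => le_Fsup hb x y (u k).2) (Fsup_nonneg _ _)

lemma Fsup_meas {α : Type*} [MeasurableSpace α]
    (hb : ∀ x : ℝ, ∀ θ ∈ Θc, |f x θ| ≤ φ x)
    (hfc : Continuous fun q : ℝ × (Fin p → ℝ) => f q.1 q.2)
    (hne : Θc.Nonempty) {a b : α → ℝ} (ha : Measurable a) (hbm : Measurable b) :
    Measurable fun s => Fsup f Θc (a s) (b s) := by
  haveI : Nonempty ↥Θc := hne.to_subtype
  obtain ⟨u, hu⟩ := TopologicalSpace.exists_dense_seq ↥Θc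
  have heq : (fun s => Fsup f Θc (a s) (b s)) = fun s =>
      ⨆ k : ℕ, |f (a s) (u k : Fin p → ℝ) - f (b s) (u k : Fin p → ℝ)| :=
    funext fun s => Fsup_eq_ciSup_seq hb hfc u hu _ _
  rw [heq]
  refine aux_meas_ciSup (fun k => ?_) (fun s => ?_)
  · have c1 : Continuous fun x : ℝ => f x (u k : Fin p → ℝ) :=
      hfc.comp (continuous_id.prodMk continuous_const)
    exact ((c1.measurable.comp ha).sub (c1.measurable.comp hbm)).abs
  · refine ⟨φ (a s) + φ (b s), ?_⟩
    rintro r ⟨k, rfl⟩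
    exact (abs_sub _ _).trans (add_le_add (hb _ _ (u k).2) (hb _ _ (u k).2))

end FsupSec
lemma key_est {T : ℝ} (hT : 0 < T) {n : ℕ} (hn : 1 ≤ n) {g Q : ℝ → ℝ} {M : ℝ}
    (hgmeas : Measurable g) (hgM : ∀ s ∈ Set.Icc (0:ℝ) T, |g s| ≤ M)
    (hQint : IntervalIntegrable Q volume 0 (T - T / n))
    (hQ0 : ∀ s, 0 ≤ Q s)
    (hcmp : ∀ s ∈ Set.Ioc (0:ℝ) (T - T / n),
      |g (T / n * ⌈s / (T / n)⌉) - g s| ≤ Q s)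
    {t : ℝ} (ht : t ∈ Set.Icc (0:ℝ) T) :
    |(n:ℝ)⁻¹ * ∑ j ∈ Finset.range ⌊t / (T / n)⌋₊, g ((j:ℝ) * (T / n)) -
      T⁻¹ * ∫ s in (0:ℝ)..t, g s| ≤
      T⁻¹ * (3 * (T / n) * M + ∫ s in (0:ℝ)..(T - T / n), Q s) := by
  have hn' : (0:ℝ) < n := by exact_mod_cast hn
  set h : ℝ := T / n with hhdef
  have hh : 0 < h := div_pos hT hn'
  have hnh : (n:ℝ) * h = T := by rw [hhdef]; field_simp
  have hhT : h ≤ T := by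
    rw [hhdef]
    exact div_le_self hT.le (by exact_mod_cast hn)
  have hM0 : 0 ≤ M := le_trans (abs_nonneg _) (hgM 0 ⟨le_refl _, hT.le⟩)
  have hQI : (0:ℝ) ≤ ∫ s in (0:ℝ)..(T - h), Q s :=
    intervalIntegral.integral_nonneg (by linarith) (fun u _ => hQ0 u)
  have hT0 : (0:ℝ) ≤ T⁻¹ := by positivity
  have ht0 := ht.1
  have htT := ht.2
  -- integrability of g on subintervals of [0,T]
  have hint : IntegrableOn g (Set.Icc (0:ℝ) T) := by
    refine Integrable.mono' (g := fun _ => M)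
      (integrableOn_const measure_Icc_lt_top.ne)
      hgmeas.aestronglyMeasurable.restrict ?_
    exact (ae_restrict_iff' measurableSet_Icc).mpr (ae_of_all _ fun s hs => by
      simpa [Real.norm_eq_abs] using hgM s hs)
  have hgInt : ∀ a b : ℝ, a ∈ Set.Icc (0:ℝ) T → b ∈ Set.Icc (0:ℝ) T →
      IntervalIntegrable g volume a b := by
    intro a b ha hb
    refine (hint.mono_set ?_).intervalIntegrable
    rw [← Set.uIcc_of_le hT.le] at ha hb ⊢
    exact Set.uIcc_subset_uIcc ha hb
  set m : ℕ := ⌊t / h⌋₊ with hmdef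
  have hmle : (m:ℝ) * h ≤ t := by
    rw [← le_div_iff₀ hh]
    exact Nat.floor_le (div_nonneg ht0 hh.le)
  have hlt : t < ((m:ℝ) + 1) * h := by
    rw [← div_lt_iff₀ hh]
    exact_mod_cast Nat.lt_floor_add_one (t / h)
  have hmn : m ≤ n := by
    have h1 : t / h ≤ (n:ℝ) := by
      rw [div_le_iff₀ hh, mul_comm]
      rw [mul_comm] at hnh
      linarith [hnh ▸ htT]
    calc m = ⌊t / h⌋₊ := rfl
      _ ≤ ⌊(n:ℝ)⌋₊ := Nat.floor_le_floor h1
      _ = n := Nat.floor_natCast n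
  rcases Nat.eq_zero_or_pos m with hm0 | hm1
  · -- m = 0 : empty sum
    rw [hm0]
    simp only [Finset.range_zero, Finset.sum_empty, mul_zero, zero_sub, abs_neg]
    have hth : t < h := by
      have := hlt
      rw [hm0] at this
      push_cast at this
      linarith
    have h1 : |∫ s in (0:ℝ)..t, g s| ≤ M * h := by
      have h2 : ‖∫ s in (0:ℝ)..t, g s‖ ≤ M * |t - 0| := by
        refine intervalIntegral.norm_integral_le_of_norm_le_const fun x hx => ?_
        rw [Set.uIoc_of_le ht0] at hx
        simpa [Real.norm_eq_abs] using hgM x ⟨hx.1.le, hx.2.trans htT⟩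
      rw [Real.norm_eq_abs] at h2
      refine h2.trans ?_
      rw [sub_zero, abs_of_nonneg ht0]
      exact mul_le_mul_of_nonneg_left hth.le hM0
    rw [abs_mul, abs_of_nonneg hT0]
    refine mul_le_mul_of_nonneg_left ?_ hT0
    nlinarith
  · -- m ≥ 1
    clear hmdef
    clear_value m
    obtain ⟨m', rfl⟩ : ∃ m', m = m' + 1 := ⟨m - 1, (Nat.succ_pred_eq_of_pos hm1).symm⟩
    have hm'h : ((m':ℝ)) * h ≤ T - h := by
      have h1 : (m':ℝ) + 1 ≤ n := by exact_mod_cast hmn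
      nlinarith
    have hm'0 : (0:ℝ) ≤ (m':ℝ) * h := by positivity
    have hm't : (m':ℝ) * h ≤ t := by
      have : (m':ℝ) * h ≤ ((m' + 1 : ℕ):ℝ) * h := by
        push_cast; nlinarith
      exact this.trans hmle
    have hm'T : (m':ℝ) * h ∈ Set.Icc (0:ℝ) T := ⟨hm'0, by linarith⟩
    -- ceil identity on pieces
    have hceil : ∀ i : ℕ, ∀ s ∈ Set.Ioc ((i:ℝ) * h) (((i:ℝ) + 1) * h),
        (⌈s / h⌉ : ℤ) = (i:ℤ) + 1 := by
      intro i s hs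
      rw [Int.ceil_eq_iff]
      constructor
      · push_cast
        rw [lt_div_iff₀ hh]
        have := hs.1
        push_cast
        linarith
      · rw [div_le_iff₀ hh]
        have := hs.2
        push_cast
        linarith
    -- value of each piece
    have hval : ∀ i : ℕ, (∫ s in ((i:ℝ) * h)..(((i:ℝ) + 1) * h), g (h * ⌈s / h⌉))
        = h * g (((i:ℝ) + 1) * h) := by
      intro i
      have hle : (i:ℝ) * h ≤ ((i:ℝ) + 1) * h := by nlinarith
      rw [intervalIntegral.integral_congr_ae (g := fun _ => g (((i:ℝ) + 1) * h))
        (ae_of_all _ fun x hx => ?_)]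
      · rw [intervalIntegral.integral_const, smul_eq_mul]
        ring
      · rw [Set.uIoc_of_le hle] at hx
        rw [hceil i x hx]
        push_cast
        ring_nf
    -- integrability of each piece
    have hpiece : ∀ i : ℕ, IntervalIntegrable (fun s => g (h * ⌈s / h⌉)) volume
        ((i:ℝ) * h) (((i:ℝ) + 1) * h) := by
      intro i
      have hle : (i:ℝ) * h ≤ ((i:ℝ) + 1) * h := by nlinarith
      rw [intervalIntegrable_iff_integrableOn_Ioc_of_le hle]
      refine (((integrableOn_const (C := g (((i:ℝ) + 1) * h)) measure_Ioc_lt_top.ne)).congr_fun (fun x hx => ?_) measurableSet_Ioc)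
      rw [hceil i x hx]
      push_cast
      ring_nf
    have hψint : IntervalIntegrable (fun s => g (h * ⌈s / h⌉)) volume 0 ((m':ℝ) * h) := by
      have := IntervalIntegrable.trans_iterate (a := fun i : ℕ => (i:ℝ) * h) (n := m')
        (f := fun s => g (h * ⌈s / h⌉)) (μ := volume) ?_
      · simpa using this
      · intro k _
        have := hpiece k
        push_cast at this ⊢
        convert this using 2 <;> ring
    have hsum : (∑ i ∈ Finset.range m', ∫ s in ((i:ℝ) * h)..(((i:ℝ) + 1) * h),
        g (h * ⌈s / h⌉)) = ∫ s in (0:ℝ)..((m':ℝ) * h), g (h * ⌈s / h⌉) := by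
      have := intervalIntegral.sum_integral_adjacent_intervals
        (a := fun i : ℕ => (i:ℝ) * h) (n := m') (f := fun s => g (h * ⌈s / h⌉)) (μ := volume) ?_
      · push_cast at this ⊢
        convert this using 2 <;> ring_nf
      · intro k _
        have := hpiece k
        push_cast at this ⊢
        convert this using 2 <;> ring
    -- the sum identity
    have hSid : (h * ∑ j ∈ Finset.range (m' + 1), g ((j:ℝ) * h))
        = h * g 0 + ∫ s in (0:ℝ)..((m':ℝ) * h), g (h * ⌈s / h⌉) := by
      rw [Finset.sum_range_succ' (fun j => g ((j:ℝ) * h)) m']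
      rw [← hsum]
      rw [mul_add, Finset.mul_sum]
      simp only [Nat.cast_zero, zero_mul, Nat.cast_add, Nat.cast_one]
      rw [add_comm]
      congr 1
      refine Finset.sum_congr rfl fun i _ => ?_
      rw [hval i]
    -- split the integral
    have hsplit : (∫ s in (0:ℝ)..t, g s)
        = (∫ s in (0:ℝ)..((m':ℝ) * h), g s) + ∫ s in ((m':ℝ) * h)..t, g s :=
      (intervalIntegral.integral_add_adjacent_intervals
        (hgInt 0 _ ⟨le_refl _, hT.le⟩ hm'T) (hgInt _ t hm'T ht)).symm
    -- main bound
    have hE1 : h * |g 0| ≤ h * M :=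
      mul_le_mul_of_nonneg_left (hgM 0 ⟨le_refl _, hT.le⟩) hh.le
    have hE2 : |(∫ s in (0:ℝ)..((m':ℝ) * h), g (h * ⌈s / h⌉)) -
        ∫ s in (0:ℝ)..((m':ℝ) * h), g s| ≤ ∫ s in (0:ℝ)..(T - h), Q s := by
      rw [← intervalIntegral.integral_sub hψint (hgInt 0 _ ⟨le_refl _, hT.le⟩ hm'T)]
      refine (intervalIntegral.abs_integral_le_integral_abs hm'0).trans ?_
      have hmono : (∫ s in (0:ℝ)..((m':ℝ) * h), |g (h * ⌈s / h⌉) - g s|)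
          ≤ ∫ s in (0:ℝ)..((m':ℝ) * h), Q s := by
        refine intervalIntegral.integral_mono_on hm'0
          ((hψint.sub (hgInt 0 _ ⟨le_refl _, hT.le⟩ hm'T)).abs)
          (hQint.mono_set ?_) fun x hx => ?_
        · rw [Set.uIcc_of_le hm'0, Set.uIcc_of_le (by linarith)]
          exact Set.Icc_subset_Icc (le_refl _) hm'h
        · rcases eq_or_lt_of_le hx.1 with h0 | h0
          · rw [← h0]
            simp only [zero_div, Int.ceil_zero, Int.cast_zero, mul_zero, sub_self, abs_zero]
            exact hQ0 0
          · exact hcmp x ⟨h0, hx.2.trans hm'h⟩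
      refine hmono.trans ?_
      exact intervalIntegral.integral_mono_interval (le_refl 0) hm'0 hm'h
        ((ae_restrict_iff' measurableSet_Ioc).mpr (ae_of_all _ fun s _ => hQ0 s)) hQint
    have hE3 : |∫ s in ((m':ℝ) * h)..t, g s| ≤ M * (2 * h) := by
      have h2 : ‖∫ s in ((m':ℝ) * h)..t, g s‖ ≤ M * |t - (m':ℝ) * h| := by
        refine intervalIntegral.norm_integral_le_of_norm_le_const fun x hx => ?_
        rw [Set.uIoc_of_le hm't] at hx
        simpa [Real.norm_eq_abs] using hgM x ⟨hm'0.trans hx.1.le, hx.2.trans htT⟩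
      rw [Real.norm_eq_abs] at h2
      refine h2.trans (mul_le_mul_of_nonneg_left ?_ hM0)
      rw [abs_of_nonneg (by linarith)]
      have : t < ((m':ℝ) + 2) * h := by
        push_cast at hlt
        nlinarith
      linarith
    -- assemble
    have hns : (n:ℝ)⁻¹ * ∑ j ∈ Finset.range (m' + 1), g ((j:ℝ) * h)
        = T⁻¹ * (h * ∑ j ∈ Finset.range (m' + 1), g ((j:ℝ) * h)) := by
      rw [← mul_assoc]
      congr 1
      rw [hhdef]
      field_simp
    rw [hns, hSid, hsplit]
    rw [← mul_sub]
    rw [abs_mul, abs_of_nonneg hT0]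
    refine mul_le_mul_of_nonneg_left ?_ hT0
    calc |h * g 0 + (∫ s in (0:ℝ)..((m':ℝ) * h), g (h * ⌈s / h⌉)) -
          ((∫ s in (0:ℝ)..((m':ℝ) * h), g s) + ∫ s in ((m':ℝ) * h)..t, g s)|
        ≤ |h * g 0| + |(∫ s in (0:ℝ)..((m':ℝ) * h), g (h * ⌈s / h⌉)) -
            ∫ s in (0:ℝ)..((m':ℝ) * h), g s| + |∫ s in ((m':ℝ) * h)..t, g s| := by
          have := abs_add_le (h * g 0) ((∫ s in (0:ℝ)..((m':ℝ) * h), g (h * ⌈s / h⌉)) -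
            ∫ s in (0:ℝ)..((m':ℝ) * h), g s)
          have h2 := abs_sub (h * g 0 + ((∫ s in (0:ℝ)..((m':ℝ) * h), g (h * ⌈s / h⌉)) -
            ∫ s in (0:ℝ)..((m':ℝ) * h), g s)) (∫ s in ((m':ℝ) * h)..t, g s)
          calc |h * g 0 + (∫ s in (0:ℝ)..((m':ℝ) * h), g (h * ⌈s / h⌉)) -
              ((∫ s in (0:ℝ)..((m':ℝ) * h), g s) + ∫ s in ((m':ℝ) * h)..t, g s)|
              = |(h * g 0 + ((∫ s in (0:ℝ)..((m':ℝ) * h), g (h * ⌈s / h⌉)) -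
                ∫ s in (0:ℝ)..((m':ℝ) * h), g s)) - ∫ s in ((m':ℝ) * h)..t, g s| := by
                congr 1
                ring
            _ ≤ _ := by
                refine h2.trans ?_
                linarith [this]
      _ ≤ h * M + (∫ s in (0:ℝ)..(T - h), Q s) + M * (2 * h) := by
          rw [abs_mul, abs_of_nonneg hh.le]
          exact add_le_add (add_le_add hE1 hE2) hE3
      _ = 3 * h * M + ∫ s in (0:ℝ)..(T - h), Q s := by ring
/-- uniform (in `θ` and `t`) law of large numbers for Riemann-sum
approximations of time averages of a càdlàg process observed at frequency `h = T/n`. -/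
theorem uniform_riemann_sum_LLN
    (T : ℝ) (hT : 0 < T)
    {Ω : Type*} [MeasurableSpace Ω] (P : Measure Ω) [IsProbabilityMeasure P]
    (X : ℝ → Ω → ℝ)
    (hXmeas : ∀ t : ℝ, Measurable (X t))
    (hright : ∀ ω : Ω, ∀ t : ℝ,
      ContinuousWithinAt (fun s => X s ω) (Set.Ici t) t)
    (hleftlim : ∀ ω : Ω, ∀ t : ℝ, 0 < t → t ≤ T → ∃ l : ℝ,
      Filter.Tendsto (fun s => X s ω) (nhdsWithin t (Set.Iio t)) (nhds l))
    (hXmom : ∀ q : ℝ, 1 ≤ q →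
      ∫⁻ ω, ENNReal.ofReal (⨆ t : Set.Icc (0:ℝ) T, |X (t:ℝ) ω| ^ q) ∂P < ⊤)
    (C₁ : ℝ)
    (hXincr : ∀ s ∈ Set.Icc (0:ℝ) T, ∀ t ∈ Set.Icc (0:ℝ) T,
      ∫⁻ ω, ENNReal.ofReal ((X t ω - X s ω) ^ 2) ∂P ≤ ENNReal.ofReal (C₁ * |t - s|))
    (p : ℕ) (Θc : Set (Fin p → ℝ)) (hΘc : IsCompact Θc)
    (f f' : ℝ → (Fin p → ℝ) → ℝ)
    (hfc : Continuous (fun q : ℝ × (Fin p → ℝ) => f q.1 q.2))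
    (hfd : ∀ θ ∈ Θc, ∀ x : ℝ, HasDerivAt (fun x' => f x' θ) (f' x θ) x)
    (hf'c : ∀ θ ∈ Θc, Continuous (fun x => f' x θ))
    (C₂ C₃ : ℝ) (hC₂ : 0 < C₂) (hC₃ : 0 < C₃)
    (hgrowth : ∀ x : ℝ, ∀ θ ∈ Θc, |f x θ| + |f' x θ| ≤ C₂ * (1 + |x| ^ C₃)) :
    ∀ ε : ℝ, 0 < ε → Filter.Tendsto
      (fun n : ℕ => P {ω | ε ≤ ⨆ θ : Θc, ⨆ t : Set.Icc (0:ℝ) T,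
        |(n:ℝ)⁻¹ * ∑ j ∈ Finset.range ⌊(t:ℝ) / (T / (n:ℝ))⌋₊,
            f (X ((j:ℝ) * (T / (n:ℝ))) ω) ↑θ
          - T⁻¹ * ∫ s in (0:ℝ)..(t:ℝ), f (X s ω) ↑θ|})
      Filter.atTop (nhds 0) := by
  intro ε hε
  rcases Θc.eq_empty_or_nonempty with rfl | hΘne
  · -- empty parameter set : the supremum is 0 < ε
    have hset : ∀ n : ℕ, {ω : Ω | ε ≤ ⨆ θ : (∅ : Set (Fin p → ℝ)),
        ⨆ t : Set.Icc (0:ℝ) T, |(n:ℝ)⁻¹ * ∑ j ∈ Finset.range ⌊(t:ℝ) / (T / (n:ℝ))⌋₊,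
            f (X ((j:ℝ) * (T / (n:ℝ))) ω) ↑θ
          - T⁻¹ * ∫ s in (0:ℝ)..(t:ℝ), f (X s ω) ↑θ|} = ∅ := by
      intro n
      ext ω
      simp only [Set.mem_setOf_eq, Set.mem_empty_iff_false, iff_false, not_le]
      haveI : IsEmpty ((∅ : Set (Fin p → ℝ)) : Type _) := by
        simp [Set.isEmpty_coe_sort]
      rw [Real.iSup_of_isEmpty]
      exact hε
    simp only [hset, measure_empty]
    exact tendsto_const_nhds
  -- growth envelope
  set φ : ℝ → ℝ := fun x => C₂ * (1 + |x| ^ C₃) with hφdef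
  have hφ0 : ∀ x, 0 ≤ φ x := fun x => by
    have h1 : (0:ℝ) ≤ |x| ^ C₃ := Real.rpow_nonneg (abs_nonneg x) _
    exact mul_nonneg hC₂.le (by linarith)
  have hfb : ∀ x : ℝ, ∀ θ ∈ Θc, |f x θ| ≤ φ x := fun x θ hθ => by
    have h1 := hgrowth x θ hθ
    have h2 := abs_nonneg (f' x θ)
    rw [hφdef]
    dsimp only
    linarith
  -- paths
  have hpath : ∀ ω, Measurable fun s => X s ω := fun ω => aux_meas_of_rightCont (hright ω)
  have hbdd : ∀ ω, ∃ M0 : ℝ, ∀ s ∈ Set.Icc (0:ℝ) T, |X s ω| ≤ M0 :=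
    fun ω => aux_bdd (hright ω) (hleftlim ω)
  -- supremum of the path on [0,T] through a countable index
  set node : Option (ℤ × ℕ) → ℝ :=
    fun o => o.elim T (fun q => max 0 (min T ((q.1 : ℝ) / 2 ^ q.2))) with hnodedef
  have hnodeIcc : ∀ o, node o ∈ Set.Icc (0:ℝ) T := by
    intro o
    cases o with
    | none => exact ⟨hT.le, le_refl T⟩
    | some q =>
        refine ⟨le_max_left _ _, max_le hT.le (min_le_left _ _)⟩
  set B : Ω → ℝ := fun ω => ⨆ o : Option (ℤ × ℕ), |X (node o) ω| with hBdef
  have hBbdd : ∀ ω, BddAbove (Set.range fun o : Option (ℤ × ℕ) => |X (node o) ω|) := by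
    intro ω
    obtain ⟨M0, hM0⟩ := hbdd ω
    refine ⟨M0, ?_⟩
    rintro r ⟨o, rfl⟩
    exact hM0 _ (hnodeIcc o)
  have hBmeas : Measurable B := aux_meas_ciSup (fun o => (hXmeas _).abs) hBbdd
  have hBdom : ∀ ω, ∀ s ∈ Set.Icc (0:ℝ) T, |X s ω| ≤ B ω := by
    intro ω s hs
    rcases eq_or_lt_of_le hs.2 with hsT | hsT
    · have h1 := le_ciSup (hBbdd ω) (none : Option (ℤ × ℕ))
      rw [hsT]
      exact h1
    · have hv0 : ∀ k : ℕ, max 0 (min T (dStep k s)) = min T (dStep k s) := by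
        intro k
        exact max_eq_right (le_min hT.le ((dStep_le k s).trans' hs.1))
      have hvmem : ∀ k : ℕ, s ≤ max 0 (min T (dStep k s)) := by
        intro k
        rw [hv0 k]
        exact le_min hsT.le (dStep_le k s)
      have hvt : Tendsto (fun k => max 0 (min T (dStep k s))) atTop (𝓝 s) := by
        have h1 : Tendsto (fun k => min T (dStep k s)) atTop (𝓝 (min T s)) :=
          tendsto_const_nhds.min (dStep_tendsto s)
        rw [min_eq_right hsT.le] at h1
        have h2 : Tendsto (fun k => max 0 (min T (dStep k s))) atTop (𝓝 (max 0 s)) :=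
          tendsto_const_nhds.max h1
        rwa [max_eq_right hs.1] at h2
      have hXv : Tendsto (fun k => |X (max 0 (min T (dStep k s))) ω|) atTop (𝓝 (|X s ω|)) := by
        have h3 : Tendsto (fun k => max 0 (min T (dStep k s))) atTop (𝓝[≥] s) :=
          tendsto_nhdsWithin_iff.mpr ⟨hvt, Eventually.of_forall hvmem⟩
        exact (continuous_abs.tendsto _).comp ((hright ω s).tendsto.comp h3)
      refine le_of_tendsto hXv (Eventually.of_forall fun k => ?_)
      exact le_ciSup (hBbdd ω) (some (⌈s * 2 ^ k⌉, k))
  have hB0 : ∀ ω, 0 ≤ B ω := fun ω => (abs_nonneg _).trans (hBdom ω 0 ⟨le_refl _, hT.le⟩)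
  set M : Ω → ℝ := fun ω => C₂ * (1 + B ω ^ C₃) with hMdef
  have hMmeas : Measurable M := by
    have h1 : Measurable fun ω => B ω ^ C₃ :=
      (Real.continuous_rpow_const hC₃.le).measurable.comp hBmeas
    exact (measurable_const.add h1).const_mul C₂
  have hM0 : ∀ ω, 0 ≤ M ω := fun ω => by
    have h1 : (0:ℝ) ≤ B ω ^ C₃ := Real.rpow_nonneg (hB0 ω) _
    exact mul_nonneg hC₂.le (by linarith)
  have hφM : ∀ ω, ∀ s ∈ Set.Icc (0:ℝ) T, φ (X s ω) ≤ M ω := by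
    intro ω s hs
    have h1 : |X s ω| ^ C₃ ≤ B ω ^ C₃ :=
      Real.rpow_le_rpow (abs_nonneg _) (hBdom ω s hs) hC₃.le
    exact mul_le_mul_of_nonneg_left (by linarith) hC₂.le
  -- the comparison integrand
  have hψmeas : ∀ n : ℕ, ∀ ω, Measurable fun s : ℝ => X (T / n * ⌈s / (T / n)⌉) ω := by
    intro n ω
    have h2 : Measurable fun z : ℤ => X (T / n * z) ω := measurable_from_top
    exact h2.comp (Int.measurable_ceil.comp (measurable_id.div_const _))
  set Q : ℕ → Ω → ℝ → ℝ :=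
    fun n ω s => Fsup f Θc (X (T / n * ⌈s / (T / n)⌉) ω) (X s ω) with hQdef
  have hQmeas : ∀ n ω, Measurable (Q n ω) :=
    fun n ω => Fsup_meas hfb hfc hΘne (hψmeas n ω) (hpath ω)
  have hQ0 : ∀ n ω s, 0 ≤ Q n ω s := fun n ω s => Fsup_nonneg _ _
  have hTn0 : ∀ n : ℕ, 0 ≤ T - T / n := by
    intro n
    rcases Nat.eq_zero_or_pos n with rfl | hn
    · simp [hT.le]
    · have : T / n ≤ T := div_le_self hT.le (by exact_mod_cast hn)
      linarith
  have hψIcc : ∀ n : ℕ, ∀ s ∈ Set.Ioc (0:ℝ) (T - T / n),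
      (T / n * ⌈s / (T / n)⌉ : ℝ) ∈ Set.Icc (0:ℝ) T := by
    intro n s hs
    rcases Nat.eq_zero_or_pos n with rfl | hn
    · simp [hT.le]
    · have hn' : (0:ℝ) < n := by exact_mod_cast hn
      have hh : 0 < T / n := div_pos hT hn'
      constructor
      · have h1 : (0:ℤ) ≤ ⌈s / (T / n)⌉ := Int.ceil_nonneg (div_nonneg hs.1.le hh.le)
        have h1' : (0:ℝ) ≤ (⌈s / (T / n)⌉ : ℝ) := by exact_mod_cast h1
        positivity
      · have h2 : (⌈s / (T / n)⌉ : ℝ) < s / (T / n) + 1 := Int.ceil_lt_add_one _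
        have h3 : T / n * (⌈s / (T / n)⌉ : ℝ) < T / n * (s / (T / n) + 1) :=
          mul_lt_mul_of_pos_left h2 hh
        have h4 : T / n * (s / (T / n) + 1) = s + T / n := by
          field_simp
        rw [h4] at h3
        linarith [hs.2]
  have hsIcc : ∀ n : ℕ, ∀ s ∈ Set.Ioc (0:ℝ) (T - T / n), s ∈ Set.Icc (0:ℝ) T := by
    intro n s hs
    refine ⟨hs.1.le, hs.2.trans ?_⟩
    have : 0 ≤ T / (n:ℝ) := div_nonneg hT.le (Nat.cast_nonneg n)
    linarith
  have hQle : ∀ n : ℕ, ∀ s ∈ Set.Ioc (0:ℝ) (T - T / n), ∀ ω, Q n ω s ≤ 2 * M ω := by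
    intro n s hs ω
    have h1 := Fsup_le_bound hfb hφ0 (X (T / n * ⌈s / (T / n)⌉) ω) (X s ω)
    have h2 := hφM ω _ (hψIcc n s hs)
    have h3 := hφM ω s (hsIcc n s hs)
    have : Q n ω s = Fsup f Θc (X (T / n * ⌈s / (T / n)⌉) ω) (X s ω) := rfl
    rw [this]
    linarith
  have hQint : ∀ n : ℕ, ∀ ω, IntervalIntegrable (Q n ω) volume 0 (T - T / n) := by
    intro n ω
    rw [intervalIntegrable_iff_integrableOn_Ioc_of_le (hTn0 n)]
    refine Integrable.mono' (g := fun _ => 2 * M ω)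
      (integrableOn_const measure_Ioc_lt_top.ne)
      ((hQmeas n ω).aestronglyMeasurable.restrict) ?_
    refine (ae_restrict_iff' measurableSet_Ioc).mpr (ae_of_all _ fun s hs => ?_)
    rw [Real.norm_eq_abs, abs_of_nonneg (hQ0 n ω s)]
    exact hQle n s hs ω
  set D : ℕ → Ω → ℝ :=
    fun n ω => T⁻¹ * (3 * (T / n) * M ω + ∫ s in (0:ℝ)..(T - T / n), Q n ω s) with hDdef
  have hD0 : ∀ n ω, 0 ≤ D n ω := by
    intro n ω
    have h1 : (0:ℝ) ≤ ∫ s in (0:ℝ)..(T - T / n), Q n ω s :=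
      intervalIntegral.integral_nonneg (hTn0 n) (fun u _ => hQ0 n ω u)
    have h2 := hM0 ω
    have h3 : (0:ℝ) ≤ T / n := div_nonneg hT.le (Nat.cast_nonneg n)
    have h4 : (0:ℝ) ≤ T⁻¹ := inv_nonneg.mpr hT.le
    have h5 : (0:ℝ) ≤ 3 * (T / n) * M ω := mul_nonneg (mul_nonneg (by norm_num) h3) h2
    rw [hDdef]
    dsimp only
    exact mul_nonneg h4 (by linarith)
  -- the uniform bound
  have hSD : ∀ n : ℕ, 1 ≤ n → ∀ ω : Ω,
      (⨆ θ : Θc, ⨆ t : Set.Icc (0:ℝ) T,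
        |(n:ℝ)⁻¹ * ∑ j ∈ Finset.range ⌊(t:ℝ) / (T / (n:ℝ))⌋₊,
            f (X ((j:ℝ) * (T / (n:ℝ))) ω) ↑θ
          - T⁻¹ * ∫ s in (0:ℝ)..(t:ℝ), f (X s ω) ↑θ|) ≤ D n ω := by
    intro n hn ω
    refine Real.iSup_le (fun θ => Real.iSup_le (fun t => ?_) (hD0 n ω)) (hD0 n ω)
    have hgmeas : Measurable fun s : ℝ => f (X s ω) (θ : Fin p → ℝ) := by
      have hfθ : Continuous fun x : ℝ => f x (θ : Fin p → ℝ) :=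
        hfc.comp (continuous_id.prodMk continuous_const)
      exact hfθ.measurable.comp (hpath ω)
    have hgM : ∀ s ∈ Set.Icc (0:ℝ) T, |f (X s ω) (θ : Fin p → ℝ)| ≤ M ω :=
      fun s hs => (hfb _ _ θ.2).trans (hφM ω s hs)
    have hcmp : ∀ s ∈ Set.Ioc (0:ℝ) (T - T / n),
        |f (X (T / n * ⌈s / (T / n)⌉) ω) (θ : Fin p → ℝ) - f (X s ω) (θ : Fin p → ℝ)|
          ≤ Q n ω s :=
      fun s _ => le_Fsup hfb _ _ θ.2
    exact key_est hT hn hgmeas hgM (hQint n ω) (hQ0 n ω) hcmp t.2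
  -- measurability of D
  have hDmeas : ∀ n : ℕ, Measurable (D n) := by
    intro n
    have h1 : Measurable fun ω => 3 * (T / n) * M ω := hMmeas.const_mul _
    have hjm : Measurable fun q : Ω × ℝ => X q.2 q.1 := aux_joint_meas hXmeas hright
    have hjm2 : Measurable fun q : Ω × ℝ => X (T / n * ⌈q.2 / (T / n)⌉) q.1 := by
      have h2 : Measurable fun r : Ω × ℤ => X (T / n * r.2) r.1 :=
        measurable_from_prod_countable_left fun z => by simpa using hXmeas (T / n * z)
      exact h2.comp (measurable_fst.prodMk
        (Int.measurable_ceil.comp (measurable_snd.div_const _)))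
    have hjointQ : Measurable fun q : Ω × ℝ => Q n q.1 q.2 :=
      Fsup_meas hfb hfc hΘne hjm2 hjm
    have h2 : Measurable fun ω => ∫ s in Set.Ioc (0:ℝ) (T - T / n), Q n ω s := by
      have := (hjointQ.stronglyMeasurable.integral_prod_right'
        (ν := volume.restrict (Set.Ioc (0:ℝ) (T - T / n)))).measurable
      exact this
    rw [hDdef]
    dsimp only
    simp only [intervalIntegral.integral_of_le (hTn0 n)]
    exact (h1.add h2).const_mul _
  -- pointwise convergence of D to 0
  have hh0 : Tendsto (fun n : ℕ => T / (n:ℝ)) atTop (𝓝 0) :=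
    tendsto_const_div_atTop_nhds_zero_nat T
  have hDto : ∀ ω, Tendsto (fun n => D n ω) atTop (𝓝 0) := by
    intro ω
    have hterm1 : Tendsto (fun n : ℕ => 3 * (T / n) * M ω) atTop (𝓝 0) := by
      have h1 := (hh0.const_mul 3).mul_const (M ω)
      simpa using h1
    have hIto : Tendsto (fun n : ℕ => ∫ s in (0:ℝ)..(T - T / n), Q n ω s) atTop (𝓝 0) := by
      have hGlim : Tendsto (fun n : ℕ => ∫ s in Set.Ioc (0:ℝ) T,
          (Set.Ioc (0:ℝ) (T - T / n)).indicator (Q n ω) s) atTop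
          (𝓝 (∫ s in Set.Ioc (0:ℝ) T, (0:ℝ))) := by
        refine tendsto_integral_of_dominated_convergence (fun _ => 2 * M ω)
          (fun n => ((hQmeas n ω).indicator measurableSet_Ioc).aestronglyMeasurable)
          (integrableOn_const measure_Ioc_lt_top.ne)
          (fun n => ae_of_all _ fun s => ?_) ?_
        · by_cases hs : s ∈ Set.Ioc (0:ℝ) (T - T / n)
          · rw [Set.indicator_of_mem hs, Real.norm_eq_abs, abs_of_nonneg (hQ0 n ω s)]
            exact hQle n s hs ω
          · rw [Set.indicator_of_notMem hs]
            simp only [norm_zero]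
            linarith [hM0 ω]
        · have hae : ∀ᵐ s ∂(volume.restrict (Set.Ioc (0:ℝ) T)), s ∈ Set.Ioc (0:ℝ) T :=
            ae_restrict_mem measurableSet_Ioc
          have hneT : ∀ᵐ s ∂(volume.restrict (Set.Ioc (0:ℝ) T)), s ≠ T := by
            rw [ae_iff]
            have hsub : {s : ℝ | ¬ s ≠ T} ⊆ {T} := by
              intro s hs
              simp only [Set.mem_setOf_eq, not_not] at hs
              simp [hs]
            refine measure_mono_null hsub ?_
            refine le_antisymm ?_ zero_le
            calc (volume.restrict (Set.Ioc (0:ℝ) T)) {T}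
                ≤ volume {T} := Measure.restrict_apply_le _ _
              _ = 0 := Real.volume_singleton
          filter_upwards [hae, hneT] with s hsIoc hsT
          have hsT' : s < T := lt_of_le_of_ne hsIoc.2 hsT
          -- the grid points tend to s from the right
          have hψlow : ∀ᶠ n : ℕ in atTop, s ≤ T / n * (⌈s / (T / n)⌉ : ℝ) := by
            filter_upwards [eventually_ge_atTop 1] with n hn
            have hn' : (0:ℝ) < n := by exact_mod_cast hn
            have hh : 0 < T / n := div_pos hT hn'
            have h1 := Int.le_ceil (s / (T / n))
            calc s = T / n * (s / (T / n)) := by field_simp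
              _ ≤ T / n * (⌈s / (T / n)⌉ : ℝ) := by
                  exact mul_le_mul_of_nonneg_left h1 hh.le
          have hψhigh : ∀ᶠ n : ℕ in atTop,
              T / n * (⌈s / (T / n)⌉ : ℝ) ≤ s + T / n := by
            filter_upwards [eventually_ge_atTop 1] with n hn
            have hn' : (0:ℝ) < n := by exact_mod_cast hn
            have hh : 0 < T / n := div_pos hT hn'
            have h1 : (⌈s / (T / n)⌉ : ℝ) < s / (T / n) + 1 := Int.ceil_lt_add_one _
            have h2 : T / n * (⌈s / (T / n)⌉ : ℝ) < T / n * (s / (T / n) + 1) :=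
              mul_lt_mul_of_pos_left h1 hh
            have h3 : T / n * (s / (T / n) + 1) = s + T / n := by field_simp
            linarith [h3 ▸ h2]
          have hψt : Tendsto (fun n : ℕ => T / n * (⌈s / (T / n)⌉ : ℝ)) atTop (𝓝 s) := by
            have hup : Tendsto (fun n : ℕ => s + T / n) atTop (𝓝 (s + 0)) :=
              tendsto_const_nhds.add hh0
            rw [add_zero] at hup
            exact tendsto_of_tendsto_of_tendsto_of_le_of_le' tendsto_const_nhds hup
              hψlow hψhigh
          have hmemt : Tendsto (fun n : ℕ => T / n * (⌈s / (T / n)⌉ : ℝ)) atTop (𝓝[≥] s) := by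
            rw [tendsto_nhdsWithin_iff]
            exact ⟨hψt, hψlow.mono fun n h => Set.mem_Ici.mpr h⟩
          have hx : Tendsto (fun n : ℕ => X (T / n * ⌈s / (T / n)⌉) ω) atTop
              (𝓝 (X s ω)) :=
            (hright ω s).tendsto.comp hmemt
          have hQto : Tendsto (fun n => Q n ω s) atTop (𝓝 0) :=
            Fsup_tendsto_zero hfc hΘc hx
          have hGQ : ∀ᶠ n : ℕ in atTop,
              (Set.Ioc (0:ℝ) (T - T / n)).indicator (Q n ω) s = Q n ω s := by
            have h1 : ∀ᶠ n : ℕ in atTop, T / (n:ℝ) < T - s :=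
              hh0.eventually (eventually_lt_nhds (by linarith) ) 
            filter_upwards [h1] with n hn
            exact Set.indicator_of_mem (Set.mem_Ioc.mpr ⟨hsIoc.1, by linarith⟩) _
          exact Filter.Tendsto.congr' (hGQ.mono fun n h => h.symm) hQto
      have hints : ∀ᶠ n : ℕ in atTop, (∫ s in Set.Ioc (0:ℝ) T,
          (Set.Ioc (0:ℝ) (T - T / n)).indicator (Q n ω) s)
          = ∫ s in (0:ℝ)..(T - T / n), Q n ω s := by
        refine Eventually.of_forall fun n => ?_
        rw [intervalIntegral.integral_of_le (hTn0 n)]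
        rw [MeasureTheory.integral_indicator measurableSet_Ioc,
          Measure.restrict_restrict measurableSet_Ioc]
        congr 1
        rw [Set.Ioc_inter_Ioc, sup_idem,
          min_eq_left (sub_le_self T (div_nonneg hT.le (Nat.cast_nonneg n)))]
      have h0 : (∫ s in Set.Ioc (0:ℝ) T, (0:ℝ)) = 0 := by simp
      rw [h0] at hGlim
      exact Filter.Tendsto.congr' hints hGlim
    have hfin := (hterm1.add hIto).const_mul T⁻¹
    rw [add_zero, mul_zero] at hfin
    rw [hDdef]
    exact hfin
  -- conclusion by comparison with the measurable majorant
  have hBmeasSet : ∀ n : ℕ, MeasurableSet {ω | ε ≤ D n ω} :=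
    fun n => measurableSet_le measurable_const (hDmeas n)
  have hPB : Tendsto (fun n : ℕ => P {ω | ε ≤ D n ω}) atTop (𝓝 0) := by
    have h2 : Tendsto (fun n : ℕ => ∫⁻ ω, Set.indicator {ω' | ε ≤ D n ω'}
        (fun _ => (1:ENNReal)) ω ∂P) atTop (𝓝 (∫⁻ _, (0:ENNReal) ∂P)) := by
      refine tendsto_lintegral_of_dominated_convergence (fun _ => 1)
        (fun n => (measurable_one.indicator (hBmeasSet n)))
        (fun n => ae_of_all _ fun ω => ?_) (by simp) (ae_of_all _ fun ω => ?_)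
      · classical
        by_cases hω : ω ∈ {ω' | ε ≤ D n ω'}
        · rw [Set.indicator_of_mem hω]
        · rw [Set.indicator_of_notMem hω]
          exact zero_le
      · have hev : ∀ᶠ n : ℕ in atTop, Set.indicator {ω' | ε ≤ D n ω'}
            (fun _ => (1:ENNReal)) ω = 0 := by
          filter_upwards [(hDto ω).eventually (eventually_lt_nhds hε)] with n hn
          exact Set.indicator_of_notMem (by simpa using not_le.mpr hn) _
        exact Filter.Tendsto.congr' (hev.mono fun n h => h.symm) tendsto_const_nhds
    have h3 : ∀ n : ℕ, P {ω | ε ≤ D n ω} = ∫⁻ ω, Set.indicator {ω' | ε ≤ D n ω'}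
        (fun _ => (1:ENNReal)) ω ∂P := fun n => (lintegral_indicator_one (hBmeasSet n)).symm
    rw [lintegral_zero] at h2
    simpa [h3] using h2
  refine tendsto_of_tendsto_of_tendsto_of_le_of_le' tendsto_const_nhds hPB
    (Eventually.of_forall fun n => zero_le) ?_
  filter_upwards [eventually_ge_atTop 1] with n hn
  exact measure_mono (fun ω hω => le_trans hω (hSD n hn ω))
end
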